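/- arXiv:1611.08870 — 4 statements merged into one kernel-verified Lean document; each statement's English description precedes it below -/
import Mathlib

section
/- If a topological space X has a π-tree, then each of the product spaces X × N, X × R_S, and X × R_S^ω also has a π-tree. -/
open Set

universe u v

/-- A family `γ` π-refines `δ`: every nonempty member of `δ` contains a
nonempty member of `γ`. -/
def PiRefines {α : Type*} (γ δ : Set (Set α)) : Prop :=
  ∀ D ∈ δ, D.Nonempty → ∃ G ∈ γ, G.Nonempty ∧ G ⊆ D

/-- The finite intersection property. -/
def HasFIP {α : Type*} (γ : Set (Set α)) : Prop :=
  ∀ δ : Set (Set α), δ ⊆ γ → δ.Finite → δ.Nonempty → (⋂₀ δ).Nonempty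

/-- `cofin A` is the family of complements in `A` of finite subsets of `A`. -/
def cofin (A : Set ℕ) : Set (Set ℕ) :=
  {B | ∃ C : Set ℕ, C.Finite ∧ C ⊆ A ∧ B = A \ C}

/-- A foliage tree on `X`: a set-theoretic tree (strict partial order with
well-ordered sets of strict predecessors) with a leaf (a subset of `X`)
attached to each node. -/
structure FoliageTree (X : Type u) where
  Node : Type
  lt : Node → Node → Prop
  lt_irrefl : ∀ a, ¬ lt a a
  lt_trans : ∀ {a b c}, lt a b → lt b c → lt a c
  wellOrdered : ∀ a : Node, IsWellOrder {b : Node // lt b a} fun x y => lt x.1 y.1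
  leaf : Node → Set X

/-- Strict proper-extension order on finite sequences of naturals. -/
def seqLT (a b : List ℕ) : Prop := a <+: b ∧ a ≠ b

namespace FoliageTree

variable {X : Type u}

/-- The sons (immediate successors) of a node. -/
def Sons (F : FoliageTree X) (x : F.Node) : Set F.Node :=
  {s | F.lt x s ∧ ¬ ∃ t, F.lt x t ∧ F.lt t s}

/-- A node is maximal if it has no strict successor. -/
def IsMaxNode (F : FoliageTree X) (x : F.Node) : Prop := ¬ ∃ s, F.lt x s

/-- A chain of nodes. -/
def IsChainN (F : FoliageTree X) (C : Set F.Node) : Prop :=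
  ∀ x ∈ C, ∀ y ∈ C, F.lt x y ∨ x = y ∨ F.lt y x

/-- A branch is a maximal chain. -/
def IsBranch (F : FoliageTree X) (B : Set F.Node) : Prop :=
  F.IsChainN B ∧ ∀ C, F.IsChainN C → B ⊆ C → B = C

/-- The height of a node: the order type of its set of strict predecessors. -/
noncomputable def height (F : FoliageTree X) (v : F.Node) : Ordinal :=
  @Ordinal.type {b : F.Node // F.lt b v} (fun x y => F.lt x.1 y.1) (F.wellOrdered v)

/-- `shoot F v`: unions of leaves over cofinite sets of sons of `v`. -/
def shoot (F : FoliageTree X) (v : F.Node) : Set (Set X) :=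
  {S | ∃ C : Set F.Node, C ⊆ F.Sons v ∧ (F.Sons v \ C).Finite ∧ S = ⋃ s ∈ C, F.leaf s}

/-- `scope F p`: the nodes whose leaf contains `p`. -/
def scope (F : FoliageTree X) (p : X) : Set F.Node := {x | p ∈ F.leaf x}

/-- The union of all leaves. -/
def flesh (F : FoliageTree X) : Set X := ⋃ x, F.leaf x

/-- `F` is a foliage `ω,ω`-tree: its skeleton is order-isomorphic to
`(ω^{<ω}, ⊂)`. -/
def IsOmegaOmegaTree (F : FoliageTree X) : Prop := Nonempty (F.lt ≃r seqLT)

/-- `F` is locally strict: the leaf of every non-maximal node is the disjoint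
union of the leaves of its sons. -/
def LocallyStrict (F : FoliageTree X) : Prop :=
  ∀ x, ¬ F.IsMaxNode x →
    F.leaf x = (⋃ s ∈ F.Sons x, F.leaf s) ∧
      ∀ s ∈ F.Sons x, ∀ t ∈ F.Sons x, s ≠ t → Disjoint (F.leaf s) (F.leaf t)

/-- `F` has strict branches: it has nodes, and along every branch the
intersection of the leaves is a singleton. -/
def StrictBranches (F : FoliageTree X) : Prop :=
  Nonempty F.Node ∧ ∀ B, F.IsBranch B → ∃ p, (⋂ x ∈ B, F.leaf x) = {p}

/-- `r` is the root: the least node. -/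
def IsRoot (F : FoliageTree X) (r : F.Node) : Prop := ∀ x, r = x ∨ F.lt r x

/-- All leaves are open. -/
def OpenIn [TopologicalSpace X] (F : FoliageTree X) : Prop := ∀ x, IsOpen (F.leaf x)

/-- `F` is a Baire foliage tree on `X`. -/
def IsBaireFoliageTree [TopologicalSpace X] (F : FoliageTree X) : Prop :=
  F.OpenIn ∧ F.LocallyStrict ∧ F.IsOmegaOmegaTree ∧ F.StrictBranches ∧
    ∃ r, F.IsRoot r ∧ F.leaf r = Set.univ

/-- `F` grows into `X`. -/
def GrowsInto [TopologicalSpace X] (F : FoliageTree X) : Prop :=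
  ∀ p : X, ∀ U ∈ nhds p, ∃ z ∈ F.scope p, PiRefines (F.shoot z) {U}

/-- `F` is a π-tree on `X`. -/
def IsPiTree [TopologicalSpace X] (F : FoliageTree X) : Prop :=
  F.IsBaireFoliageTree ∧ F.GrowsInto

/-- `rise F p U`: the set of (finite) heights of nodes `v` whose leaf contains
`p` and whose shoot π-refines `{U}`. -/
noncomputable def rise (F : FoliageTree X) (p : X) (U : Set X) : Set ℕ :=
  {n | ∃ v ∈ F.scope p, PiRefines (F.shoot v) {U} ∧ F.height v = (n : Ordinal)}

/-- `Rise F`: all sets `rise F p U` for `p ∈ X` and `U` a neighbourhood of `p`. -/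
def Rise [TopologicalSpace X] (F : FoliageTree X) : Set (Set ℕ) :=
  {R | ∃ p U, U ∈ nhds p ∧ R = F.rise p U}

end FoliageTree

/-- The Sorgenfrey line: the reals with the topology generated by the
half-open intervals `[a, b)`. -/
def SorgLine : Type := ℝ

instance : TopologicalSpace SorgLine :=
  TopologicalSpace.generateFrom {s : Set ℝ | ∃ a b : ℝ, s = Set.Ico a b}

namespace PiWork
open Set

variable {Z : Type u} [TopologicalSpace Z]

/-- prefix of length n of an infinite sequence -/
def pre (x : ℕ → ℕ) (n : ℕ) : List ℕ := (List.range n).map x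

lemma pre_succ (x : ℕ → ℕ) (n : ℕ) : pre x (n+1) = pre x n ++ [x n] := by
  simp [pre, List.range_succ]

lemma pre_length (x : ℕ → ℕ) (n : ℕ) : (pre x n).length = n := by simp [pre]

lemma pre_take (x : ℕ → ℕ) (m n : ℕ) (h : m ≤ n) : (pre x n).take m = pre x m := by
  rw [pre, pre, ← List.map_take, List.take_range, Nat.min_eq_left h]

lemma pre_prefix (x : ℕ → ℕ) {m n : ℕ} (h : m ≤ n) : pre x m <+: pre x n := by
  rw [← pre_take x m n h]; exact List.take_prefix _ _

lemma eq_pre (u : List ℕ) : u = pre (fun i => u.getD i 0) u.length := by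
  apply List.ext_getElem
  · simp [pre]
  · intro i h1 h2
    simp [pre, List.getD_eq_getElem?_getD, List.getElem?_eq_getElem h1]

lemma seqLT_trans {a b c : List ℕ} (h1 : seqLT a b) (h2 : seqLT b c) : seqLT a c := by
  obtain ⟨p1, n1⟩ := h1; obtain ⟨p2, n2⟩ := h2
  refine ⟨p1.trans p2, ?_⟩
  rintro rfl
  exact n1 (p1.eq_of_length (Nat.le_antisymm p1.length_le p2.length_le))

lemma seqLT_irrefl (a : List ℕ) : ¬ seqLT a a := fun h => h.2 rfl

lemma prefix_eq_take {v w : List ℕ} (h : v <+: w) : v = w.take v.length := by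
  obtain ⟨t, rfl⟩ := h
  simp

lemma prefix_concat_cases {v w : List ℕ} {k : ℕ} (h : v <+: w ++ [k]) :
    v = w ++ [k] ∨ v <+: w := by
  rcases Nat.lt_or_ge v.length (w ++ [k]).length with hl | hl
  · right
    have hv := prefix_eq_take h
    have hle : v.length ≤ w.length := by
      simp at hl; omega
    rw [List.take_append_of_le_length hle] at hv
    exact hv ▸ List.take_prefix _ _
  · left
    exact h.eq_of_length (Nat.le_antisymm h.length_le hl)

/-- sons of u in the seqLT order are exactly the u ++ [k] -/
lemma seqLT_son_iff {u v : List ℕ} :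
    (seqLT u v ∧ ¬ ∃ t, seqLT u t ∧ seqLT t v) ↔ ∃ k, v = u ++ [k] := by
  constructor
  · rintro ⟨⟨hp, hne⟩, hmid⟩
    have hlt : u.length < v.length :=
      Nat.lt_of_le_of_ne hp.length_le (fun h => hne (hp.eq_of_length h))
    rcases Nat.lt_or_ge (u.length + 1) v.length with h2 | h2
    · exfalso
      apply hmid
      have hu : u = v.take u.length := prefix_eq_take hp
      have htt : (v.take (u.length + 1)).take u.length = v.take u.length := by
        rw [List.take_take]; congr 1; omega
      have hlen1 : (v.take (u.length + 1)).length = u.length + 1 := by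
        rw [List.length_take]; omega
      refine ⟨v.take (u.length + 1), ⟨?_, ?_⟩, ⟨List.take_prefix _ _, ?_⟩⟩
      · conv_lhs => rw [hu, ← htt]
        exact List.take_prefix _ _
      · intro h
        have := congrArg List.length h
        rw [hlen1] at this; omega
      · intro h
        have := congrArg List.length h
        rw [hlen1] at this; omega
    · have hlen : v.length = u.length + 1 := Nat.le_antisymm h2 hlt
      obtain ⟨t, ht⟩ := hp
      refine ⟨t.getD 0 0, ?_⟩
      have htl : t.length = 1 := by
        have := congrArg List.length ht
        simp [hlen] at this; omega
      obtain ⟨a, rfl⟩ := List.length_eq_one_iff.mp htl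
      simpa using ht.symm
  · rintro ⟨k, rfl⟩
    refine ⟨⟨⟨[k], rfl⟩, ?_⟩, ?_⟩
    · intro h
      have := congrArg List.length h
      simp at this
    · rintro ⟨t, ⟨hp1, hn1⟩, ⟨hp2, hn2⟩⟩
      have l1 : u.length < t.length :=
        Nat.lt_of_le_of_ne hp1.length_le (fun h => hn1 (hp1.eq_of_length h))
      have l2 : t.length < u.length + 1 := by
        have h3 := hp2.length_le
        simp only [List.length_append, List.length_cons, List.length_nil] at h3
        rcases Nat.lt_or_ge t.length (u.length + 1) with h | h
        · exact h
        · exfalso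
          exact hn2 (hp2.eq_of_length (by simp; omega))
      omega

end PiWork
namespace PiWork

/-- A "raw" list-indexed Baire foliage tree. -/
structure Raw (Z : Type u) [TopologicalSpace Z] where
  L : List ℕ → Set Z
  opn : ∀ u, IsOpen (L u)
  uni : ∀ u, L u = ⋃ k, L (u ++ [k])
  dis : ∀ u, ∀ ⦃j k : ℕ⦄, j ≠ k → Disjoint (L (u ++ [j])) (L (u ++ [k]))
  rt : L [] = Set.univ
  int : ∀ x : ℕ → ℕ, ∃ z : Z, ⋂ n, L (pre x n) = {z}

namespace Raw

variable {Z : Type u} [TopologicalSpace Z] (R : Raw Z)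

def Grows : Prop :=
  ∀ p U, U ∈ nhds p → ∃ u, p ∈ R.L u ∧ ∃ N, ∀ k, N ≤ k → R.L (u ++ [k]) ⊆ U

def Dia2 : Prop :=
  ∀ q W, W ∈ nhds q → ∃ Lv, ∀ b, q ∈ R.L b → Lv ≤ b.length → 2 ∣ b.length →
    ∃ N, ∀ k k', N ≤ k → N ≤ k' → R.L (b ++ [k] ++ [k']) ⊆ W

lemma step_subset (u : List ℕ) (k : ℕ) : R.L (u ++ [k]) ⊆ R.L u := by
  rw [R.uni u]; exact Set.subset_iUnion (fun k => R.L (u ++ [k])) k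

lemma prefix_subset : ∀ {u v : List ℕ}, v <+: u → R.L u ⊆ R.L v := by
  intro u
  induction u using List.reverseRecOn with
  | nil => intro v hv; rw [List.prefix_nil.mp hv]
  | append_singleton w k ih =>
    intro v hv
    rcases prefix_concat_cases hv with h | h
    · rw [h]
    · exact (R.step_subset w k).trans (ih h)

lemma ne (u : List ℕ) : (R.L u).Nonempty := by
  obtain ⟨z, hz⟩ := R.int (fun i => u.getD i 0)
  refine ⟨z, ?_⟩
  have : z ∈ ⋂ n, R.L (pre (fun i => u.getD i 0) n) := hz ▸ rfl
  have h2 := Set.mem_iInter.mp this u.length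
  rwa [← eq_pre u] at h2

/-- existence and uniqueness of the node of given length containing a point -/
lemma exists_unique_level (p : Z) : ∀ n, ∃! u : List ℕ, u.length = n ∧ p ∈ R.L u := by
  intro n
  induction n with
  | zero =>
    refine ⟨[], ⟨rfl, by rw [R.rt]; trivial⟩, ?_⟩
    rintro v ⟨hv, -⟩
    exact List.length_eq_zero_iff.mp hv
  | succ n ih =>
    obtain ⟨u, ⟨hul, hup⟩, huu⟩ := ih
    have : p ∈ ⋃ k, R.L (u ++ [k]) := by rw [← R.uni]; exact hup
    obtain ⟨k, hk⟩ := Set.mem_iUnion.mp this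
    refine ⟨u ++ [k], ⟨by simp [hul], hk⟩, ?_⟩
    rintro v ⟨hvl, hvp⟩
    rcases List.eq_nil_or_concat v with rfl | ⟨w, j, rfl⟩
    · simp at hvl
    · rw [List.concat_eq_append] at hvp hvl ⊢
      have hwl : w.length = n := by simp at hvl; omega
      have hwp : p ∈ R.L w := R.step_subset w j hvp
      have hw : w = u := huu w ⟨hwl, hwp⟩
      subst hw
      congr 1
      by_contra hjk
      have := R.dis w (j := j) (k := k) (by simpa using hjk)
      exact Set.not_disjoint_iff.mpr ⟨p, hvp, hk⟩ this

/-- any two nodes containing a common point are comparable -/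
lemma comparable {p : Z} {u v : List ℕ} (hu : p ∈ R.L u) (hv : p ∈ R.L v) :
    u <+: v ∨ v <+: u := by
  rcases Nat.le_or_le u.length v.length with h | h
  · left
    have h1 : p ∈ R.L (v.take u.length) := R.prefix_subset (List.take_prefix _ _) hv
    have h2 := (R.exists_unique_level p u.length).unique ⟨rfl, hu⟩
      ⟨by rw [List.length_take]; omega, h1⟩
    rw [h2]; exact List.take_prefix _ _
  · right
    have h1 : p ∈ R.L (u.take v.length) := R.prefix_subset (List.take_prefix _ _) hu
    have h2 := (R.exists_unique_level p v.length).unique ⟨rfl, hv⟩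
      ⟨by rw [List.length_take]; omega, h1⟩
    rw [h2]; exact List.take_prefix _ _

/-- Key deep-growth lemma: nodes with tail-sons inside U exist at arbitrarily
deep levels of the branch of p. -/
lemma growsDeep (hg : R.Grows) (p : Z) (U : Set Z) (hU : U ∈ nhds p) (m : ℕ) :
    ∃ u, p ∈ R.L u ∧ m ≤ u.length ∧ ∃ N, ∀ k, N ≤ k → R.L (u ++ [k]) ⊆ U := by
  obtain ⟨c, ⟨hcl, hcp⟩, -⟩ := R.exists_unique_level p m
  have hU' : U ∩ R.L c ∈ nhds p :=
    Filter.inter_mem hU ((R.opn c).mem_nhds hcp)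
  obtain ⟨u, hup, N, hN⟩ := hg p (U ∩ R.L c) hU'
  refine ⟨u, hup, ?_, N, fun k hk => (hN k hk).trans Set.inter_subset_left⟩
  by_contra hlen
  push_neg at hlen
  -- u is a strict prefix of c
  have hpre : u <+: c := by
    rcases R.comparable hup hcp with h | h
    · exact h
    · exfalso; have := h.length_le; omega
  have hu : u = c.take u.length := prefix_eq_take hpre
  set j := c.getD u.length 0 with hj
  have hpj : u ++ [j] <+: c := by
    have : c.take (u.length + 1) = c.take u.length ++ [c.getD u.length 0] := by
      rw [List.take_succ]
      congr 1
      rw [List.getD_eq_getElem?_getD]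
      have hlt : u.length < c.length := by omega
      rw [List.getElem?_eq_getElem hlt]
      rfl
    rw [hu, hj]
    rw [← this]
    exact List.take_prefix _ _
  -- pick k ≥ N with k ≠ j
  set k := max N (j + 1) with hk
  have hk1 : N ≤ k := le_max_left _ _
  have hk2 : k ≠ j := by omega
  have hsub : R.L (u ++ [k]) ⊆ R.L (u ++ [j]) := by
    refine ((hN k hk1).trans Set.inter_subset_right).trans (R.prefix_subset hpj)
  obtain ⟨w, hw⟩ := R.ne (u ++ [k])
  exact Set.not_disjoint_iff.mpr ⟨w, hsub hw, hw⟩ (R.dis u hk2).symm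

end Raw
end PiWork
namespace PiWork
namespace Raw

variable {Z : Type u} [TopologicalSpace Z] (R : Raw Z)

lemma wellOrdered_pred (a : List ℕ) :
    IsWellOrder {b : List ℕ // seqLT b a} (fun x y => seqLT x.1 y.1) := by
  have htri : ∀ x y : {b : List ℕ // seqLT b a},
      seqLT x.1 y.1 ∨ x = y ∨ seqLT y.1 x.1 := by
    rintro ⟨x, hx⟩ ⟨y, hy⟩
    rcases List.prefix_or_prefix_of_prefix hx.1 hy.1 with h | h
    · by_cases hxy : x = y
      · exact Or.inr (Or.inl (Subtype.ext hxy))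
      · exact Or.inl ⟨h, hxy⟩
    · by_cases hxy : y = x
      · exact Or.inr (Or.inl (Subtype.ext hxy.symm))
      · exact Or.inr (Or.inr ⟨h, hxy⟩)
  refine { trichotomous := (fun x y h1 h2 => ((htri x y).resolve_left h1).resolve_right h2), wf := ?_ }
  · refine Subrelation.wf (r := InvImage (· < ·) (fun x : {b // seqLT b a} => x.1.length)) ?_
      (InvImage.wf _ (Nat.lt_wfRel.wf))
    rintro x y ⟨hp, hne⟩
    exact Nat.lt_of_le_of_ne hp.length_le (fun h => hne (hp.eq_of_length h))

/-- the foliage tree built from a raw tree -/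
def toTree : FoliageTree Z where
  Node := List ℕ
  lt := seqLT
  lt_irrefl := seqLT_irrefl
  lt_trans := fun h1 h2 => seqLT_trans h1 h2
  wellOrdered := wellOrdered_pred
  leaf := R.L

lemma sonsUnion (u : List ℕ) :
    R.L u = ⋃ s ∈ {v : List ℕ | ∃ k, v = u ++ [k]}, R.L s := by
  rw [R.uni u]
  ext z
  simp only [Set.mem_iUnion]
  constructor
  · rintro ⟨k, hk⟩; exact ⟨u ++ [k], ⟨k, rfl⟩, hk⟩
  · rintro ⟨v, ⟨k, rfl⟩, hk⟩; exact ⟨k, hk⟩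

lemma sonsDisj (u : List ℕ) {s t : List ℕ} (hs : s ∈ {v : List ℕ | ∃ k, v = u ++ [k]})
    (ht : t ∈ {v : List ℕ | ∃ k, v = u ++ [k]}) (hst : s ≠ t) :
    Disjoint (R.L s) (R.L t) := by
  obtain ⟨j, rfl⟩ := hs
  obtain ⟨k, rfl⟩ := ht
  refine R.dis u (fun h => hst ?_)
  rw [h]

lemma toTree_sons (u : List ℕ) : (R.toTree).Sons u = {v | ∃ k, v = u ++ [k]} := by
  ext v
  exact seqLT_son_iff

lemma toTree_branch {B : Set (List ℕ)} (hB : (R.toTree).IsBranch B) :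
    ∃ x : ℕ → ℕ, B = Set.range (pre x) := by
  obtain ⟨hC, hM⟩ := hB
  -- ∅-case and downward closure
  have hnil : ([] : List ℕ) ∈ B := by
    have hch : (R.toTree).IsChainN (B ∪ {[]}) := by
      rintro x (hx | hx) y (hy | hy)
      · exact hC x hx y hy
      · rcases Set.mem_singleton_iff.mp hy with rfl
        by_cases h : x = []
        · exact Or.inr (Or.inl h)
        · exact Or.inr (Or.inr ⟨List.nil_prefix, fun hh => h hh.symm⟩)
      · rcases Set.mem_singleton_iff.mp hx with rfl
        by_cases h : y = []
        · exact Or.inr (Or.inl h.symm)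
        · exact Or.inl ⟨List.nil_prefix, fun hh => h hh.symm⟩
      · exact Or.inr (Or.inl (hx.trans hy.symm))
    have := hM _ hch Set.subset_union_left
    rw [this]
    exact Or.inr rfl
  have hdc : ∀ u ∈ B, ∀ w, w <+: u → w ∈ B := by
    intro u hu w hw
    have hch : (R.toTree).IsChainN (B ∪ {w}) := by
      have hcmp : ∀ v ∈ B, seqLT v w ∨ v = w ∨ seqLT w v := by
        intro v hv
        rcases hC v hv u hu with h | h | h
        · -- v <+: u and w <+: u
          rcases List.prefix_or_prefix_of_prefix h.1 hw with h2 | h2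
          · by_cases hvw : v = w
            · exact Or.inr (Or.inl hvw)
            · exact Or.inl ⟨h2, hvw⟩
          · by_cases hvw : w = v
            · exact Or.inr (Or.inl hvw.symm)
            · exact Or.inr (Or.inr ⟨h2, hvw⟩)
        · subst h
          by_cases hvw : v = w
          · exact Or.inr (Or.inl hvw)
          · exact Or.inr (Or.inr ⟨hw, fun hh => hvw hh.symm⟩)
        · -- u <+: v, w <+: u
          by_cases hvw : w = v
          · exact Or.inr (Or.inl hvw.symm)
          · exact Or.inr (Or.inr ⟨hw.trans h.1, hvw⟩)
      rintro x (hx | hx) y (hy | hy)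
      · exact hC x hx y hy
      · rcases Set.mem_singleton_iff.mp hy with rfl
        rcases hcmp x hx with h | h | h
        · exact Or.inl h
        · exact Or.inr (Or.inl h)
        · exact Or.inr (Or.inr h)
      · rcases Set.mem_singleton_iff.mp hx with rfl
        rcases hcmp y hy with h | h | h
        · exact Or.inr (Or.inr h)
        · exact Or.inr (Or.inl h.symm)
        · exact Or.inl h
      · exact Or.inr (Or.inl (hx.trans hy.symm))
    have := hM _ hch Set.subset_union_left
    rw [this]
    exact Or.inr rfl
  -- lengths are unbounded
  have hub : ∀ n, ∃ u ∈ B, u.length = n := by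
    have hunb : ∀ n, ∃ u ∈ B, n ≤ u.length := by
      by_contra h
      push_neg at h
      obtain ⟨n, hn⟩ := h
      set S := {m | ∃ u ∈ B, u.length = m} with hS
      have hSne : S.Nonempty := ⟨0, [], hnil, rfl⟩
      have hSb : BddAbove S := by
        refine ⟨n, ?_⟩
        rintro m ⟨u, hu, rfl⟩
        exact le_of_lt (hn u hu)
      obtain ⟨u, huB, hul⟩ := Nat.sSup_mem hSne hSb
      have hmax : ∀ v ∈ B, v <+: u := by
        intro v hv
        have hvle : v.length ≤ sSup S := le_csSup hSb ⟨v, hv, rfl⟩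
        rcases hC v hv u huB with h | h | h
        · exact h.1
        · exact h ▸ List.prefix_refl _
        · exfalso
          have := h.1.length_le
          have hne2 : u.length ≠ v.length := fun hh => h.2 (h.1.eq_of_length hh)
          omega
      have hch : (R.toTree).IsChainN (B ∪ {((u ++ [0] : List ℕ))}) := by
        rintro x (hx | hx) y (hy | hy)
        · exact hC x hx y hy
        · rcases Set.mem_singleton_iff.mp hy with rfl
          refine Or.inl ⟨(hmax x hx).trans ⟨[0], rfl⟩, ?_⟩
          intro hh
          have h1 := (hmax x hx).length_le
          have h2 : x.length = u.length + 1 := by simp [hh]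
          omega
        · rcases Set.mem_singleton_iff.mp hx with rfl
          refine Or.inr (Or.inr ⟨(hmax y hy).trans ⟨[0], rfl⟩, ?_⟩)
          intro hh
          have h1 := (hmax y hy).length_le
          have h2 : y.length = u.length + 1 := by simp [hh]
          omega
        · exact Or.inr (Or.inl (hx.trans hy.symm))
      have heq := hM _ hch Set.subset_union_left
      have hmem : u ++ [0] ∈ B := by rw [heq]; exact Or.inr rfl
      have hle : (u ++ [0]).length ≤ sSup S := le_csSup hSb ⟨_, hmem, rfl⟩
      simp at hle
      omega
    intro n
    obtain ⟨u, hu, hl⟩ := hunb n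
    refine ⟨u.take n, hdc u hu _ (List.take_prefix _ _), ?_⟩
    rw [List.length_take]
    omega
  have huniq : ∀ u ∈ B, ∀ v ∈ B, u.length = v.length → u = v := by
    intro u hu v hv hl
    rcases hC u hu v hv with h | h | h
    · exact h.1.eq_of_length hl
    · exact h
    · exact (h.1.eq_of_length hl.symm).symm
  choose f hfB hfl using hub
  have hstep : ∀ n, f (n+1) = f n ++ [(f (n+1)).getD n 0] := by
    intro n
    have hcmp : f n <+: f (n+1) := by
      rcases hC _ (hfB n) _ (hfB (n+1)) with h | h | h
      · exact h.1
      · rw [h]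
      · exfalso
        have := h.1.length_le
        rw [hfl n, hfl (n+1)] at this
        omega
    have h1 : f n = (f (n+1)).take n := by
      have := prefix_eq_take hcmp
      rwa [hfl n] at this
    have h2 : (f (n+1)).take (n+1) = f (n+1) := List.take_of_length_le (by rw [hfl])
    have h3 : (f (n+1))[n]?.toList = [(f (n+1)).getD n 0] := by
      have hlt : n < (f (n+1)).length := by rw [hfl]; omega
      rw [List.getElem?_eq_getElem hlt, List.getD_eq_getElem _ _ hlt]
      rfl
    conv_lhs => rw [← h2]
    rw [List.take_succ, h3, ← h1]
  set x : ℕ → ℕ := fun n => (f (n+1)).getD n 0 with hx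
  have hfpre : ∀ n, f n = pre x n := by
    intro n
    induction n with
    | zero => exact List.length_eq_zero_iff.mp (hfl 0)
    | succ n ih => rw [hstep n, ih, ← pre_succ]
  refine ⟨x, ?_⟩
  ext u
  constructor
  · intro hu
    exact ⟨u.length, ((hfpre u.length) ▸ huniq u hu _ (hfB u.length) (hfl u.length).symm).symm⟩
  · rintro ⟨n, rfl⟩
    exact (hfpre n) ▸ hfB n

theorem isPiTree (hg : R.Grows) : (R.toTree).IsPiTree := by
  constructor
  · refine ⟨R.opn, ?_, ?_, ?_, ?_⟩
    · -- locally strict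
      intro u _
      rw [toTree_sons R u]
      exact ⟨R.sonsUnion u, fun s hs t ht hst => R.sonsDisj u hs ht hst⟩
    · exact ⟨⟨Equiv.refl _, Iff.rfl⟩⟩
    · refine ⟨⟨[]⟩, ?_⟩
      intro B hB
      obtain ⟨x, rfl⟩ := R.toTree_branch hB
      obtain ⟨z, hz⟩ := R.int x
      refine ⟨z, ?_⟩
      show ⋂ u ∈ Set.range (pre x), R.L u = {z}
      rw [Set.biInter_range]
      exact hz
    · refine ⟨[], ?_, R.rt⟩
      intro v
      by_cases h : v = []
      · exact Or.inl h.symm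
      · exact Or.inr ⟨List.nil_prefix, fun hh => h hh.symm⟩
  · -- grows into
    intro p U hU
    obtain ⟨u, hup, N, hN⟩ := hg p U hU
    set C : Set (List ℕ) := {v : List ℕ | ∃ k, N ≤ k ∧ v = u ++ [k]} with hCdef
    refine ⟨u, hup, ?_⟩
    intro D hD hDne
    rcases Set.mem_singleton_iff.mp hD with rfl
    refine ⟨⋃ s ∈ C, R.L s, ⟨C, ?_, ?_, rfl⟩, ?_, ?_⟩
    · rintro v ⟨k, _, rfl⟩
      rw [toTree_sons]
      exact ⟨k, rfl⟩
    · refine Set.Finite.subset ((Set.finite_Iio N).image (fun k => u ++ [k])) ?_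
      rintro v ⟨hv1, hv2⟩
      rw [toTree_sons] at hv1
      obtain ⟨k, rfl⟩ := hv1
      refine ⟨k, ?_, rfl⟩
      simp only [Set.mem_Iio]
      by_contra h
      exact hv2 ⟨k, by omega, rfl⟩
    · obtain ⟨z, hz⟩ := R.ne (u ++ [N])
      exact ⟨z, Set.mem_biUnion ⟨N, le_refl _, rfl⟩ hz⟩
    · rintro z hz
      obtain ⟨v, hv, hzv⟩ := Set.mem_iUnion₂.mp hz
      obtain ⟨k, hk, rfl⟩ := hv
      exact hN k hk hzv

end Raw
end PiWork
namespace PiWork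
open Set

variable {X : Type u} [TopologicalSpace X]

lemma transport_sons (F : FoliageTree X) (e : F.lt ≃r seqLT) (u : List ℕ) (s : F.Node) :
    s ∈ F.Sons (e.symm u) ↔ ∃ k, s = e.symm (u ++ [k]) := by
  unfold FoliageTree.Sons
  have h1 : F.lt (e.symm u) s ↔ seqLT u (e s) := by
    conv_lhs => rw [show s = e.symm (e s) by simp]
    rw [e.symm.map_rel_iff]
  have h2 : (∃ t, F.lt (e.symm u) t ∧ F.lt t s) ↔ ∃ t', seqLT u t' ∧ seqLT t' (e s) := by
    constructor
    · rintro ⟨t, ht1, ht2⟩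
      refine ⟨e t, ?_, ?_⟩
      · rw [show t = e.symm (e t) by simp] at ht1
        rwa [e.symm.map_rel_iff] at ht1
      · rw [show t = e.symm (e t) by simp, show s = e.symm (e s) by simp] at ht2
        rwa [e.symm.map_rel_iff] at ht2
    · rintro ⟨t', ht1, ht2⟩
      refine ⟨e.symm t', ?_, ?_⟩
      · rwa [← e.symm.map_rel_iff] at ht1
      · rw [show s = e.symm (e s) by simp]
        rwa [← e.symm.map_rel_iff] at ht2
  constructor
  · rintro ⟨hlt, hmid⟩
    rw [h1] at hlt
    rw [h2] at hmid
    obtain ⟨k, hk⟩ := seqLT_son_iff.mp ⟨hlt, hmid⟩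
    exact ⟨k, by rw [← hk]; simp⟩
  · rintro ⟨k, rfl⟩
    have h3 := (seqLT_son_iff (u := u) (v := u ++ [k])).mpr ⟨k, rfl⟩
    refine ⟨?_, ?_⟩
    · rw [h1]; simpa using h3.1
    · rw [h2]
      intro hc
      apply h3.2
      simpa using hc

lemma transport_not_max (F : FoliageTree X) (e : F.lt ≃r seqLT) (x : F.Node) :
    ¬ F.IsMaxNode x := by
  intro h
  apply h
  refine ⟨e.symm (e x ++ [0]), ?_⟩
  conv_lhs => rw [show x = e.symm (e x) by simp]
  rw [e.symm.map_rel_iff]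
  refine ⟨⟨[0], rfl⟩, ?_⟩
  intro hh
  have := congrArg List.length hh
  simp at this

/-- transport a π-tree to a raw tree -/
noncomputable def transport (F : FoliageTree X) (e : F.lt ≃r seqLT) (h : F.IsPiTree) :
    Raw X where
  L u := F.leaf (e.symm u)
  opn u := h.1.1 _
  uni u := by
    show F.leaf (e.symm u) = ⋃ k, F.leaf (e.symm (u ++ [k]))
    obtain ⟨hu, -⟩ := h.1.2.1 (e.symm u) (transport_not_max F e _)
    rw [hu]
    ext z
    simp only [Set.mem_iUnion]
    constructor
    · rintro ⟨s, hs, hz⟩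
      obtain ⟨k, rfl⟩ := (transport_sons F e u s).mp hs
      exact ⟨k, hz⟩
    · rintro ⟨k, hz⟩
      exact ⟨e.symm (u ++ [k]), (transport_sons F e u _).mpr ⟨k, rfl⟩, hz⟩
  dis u j k hjk := by
    obtain ⟨-, hd⟩ := h.1.2.1 (e.symm u) (transport_not_max F e _)
    refine hd _ ((transport_sons F e u _).mpr ⟨j, rfl⟩) _
      ((transport_sons F e u _).mpr ⟨k, rfl⟩) ?_
    intro hh
    have : u ++ [j] = u ++ [k] := e.symm.injective hh
    simp at this
    exact hjk this
  rt := by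
    show F.leaf (e.symm []) = univ
    obtain ⟨r, hr, hru⟩ := h.1.2.2.2.2
    have hre : r = e.symm [] := by
      rcases hr (e.symm []) with h1 | h1
      · exact h1
      · exfalso
        have h2 : seqLT (e r) [] := by
          rw [show r = e.symm (e r) by simp] at h1
          rwa [e.symm.map_rel_iff] at h1
        exact h2.2 (List.prefix_nil.mp h2.1)
    rw [← hre, hru]
  int x := by
    show ∃ z, ⋂ n, F.leaf (e.symm (pre x n)) = {z}
    have hB : F.IsBranch (e.symm '' (Set.range (pre x))) := by
      constructor
      · rintro a ⟨ua, ⟨ma, rfl⟩, rfl⟩ b ⟨ub, ⟨mb, rfl⟩, rfl⟩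
        rcases Nat.lt_trichotomy ma mb with hlt | heq | hgt
        · left
          rw [e.symm.map_rel_iff]
          refine ⟨pre_prefix x (le_of_lt hlt), ?_⟩
          intro hh
          have := congrArg List.length hh
          rw [pre_length, pre_length] at this
          omega
        · right; left; rw [heq]
        · right; right
          rw [e.symm.map_rel_iff]
          refine ⟨pre_prefix x (le_of_lt hgt), ?_⟩
          intro hh
          have := congrArg List.length hh
          rw [pre_length, pre_length] at this
          omega
      · intro C hC hBC
        refine Set.Subset.antisymm hBC ?_
        intro c hc
        have hcomp : ∀ n, seqLT (e c) (pre x n) ∨ e c = pre x n ∨ seqLT (pre x n) (e c) := by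
          intro n
          have hmem : e.symm (pre x n) ∈ C := hBC ⟨pre x n, ⟨n, rfl⟩, rfl⟩
          rcases hC c hc _ hmem with h1 | h1 | h1
          · left
            rw [show c = e.symm (e c) by simp] at h1
            rwa [e.symm.map_rel_iff] at h1
          · right; left
            rw [h1]; simp
          · right; right
            rw [show c = e.symm (e c) by simp] at h1
            rwa [e.symm.map_rel_iff] at h1
        have hec : e c = pre x (e c).length := by
          rcases hcomp (e c).length with h1 | h1 | h1
          · exact h1.1.eq_of_length (by rw [pre_length])
          · exact h1
          · exact (h1.1.eq_of_length (by rw [pre_length])).symm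
        exact ⟨pre x (e c).length, ⟨_, rfl⟩, by rw [← hec]; simp⟩
    obtain ⟨z, hz⟩ := h.1.2.2.2.1.2 _ hB
    refine ⟨z, ?_⟩
    rw [← hz, Set.biInter_image, Set.biInter_range]

lemma transport_grows (F : FoliageTree X) (e : F.lt ≃r seqLT) (h : F.IsPiTree) :
    (transport F e h).Grows := by
  intro p U hU
  obtain ⟨z, hscope, hpr⟩ := h.2 p U hU
  obtain ⟨S, hSshoot, hSne, hSsub⟩ := hpr U rfl ⟨p, mem_of_mem_nhds hU⟩
  obtain ⟨C, hCsub, hCfin, rfl⟩ := hSshoot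
  set u := e z with hu
  have hz : z = e.symm u := by simp [hu]
  refine ⟨u, ?_, ?_⟩
  · show p ∈ F.leaf (e.symm u)
    rwa [← hz]
  · set K := {k : ℕ | e.symm (u ++ [k]) ∈ C} with hK
    have hKc : {k : ℕ | k ∉ K}.Finite := by
      have hinj : Function.Injective (fun k : ℕ => e.symm (u ++ [k])) := by
        intro a b hab
        have : u ++ [a] = u ++ [b] := e.symm.injective hab
        simpa using this
      refine Set.Finite.subset
        (Set.Finite.preimage (hinj.injOn) hCfin) ?_
      intro k hk
      refine ⟨?_, hk⟩
      rw [hz]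
      exact (transport_sons F e u _).mpr ⟨k, rfl⟩
    obtain ⟨N0, hN0⟩ := hKc.bddAbove
    refine ⟨N0 + 1, fun k hk => ?_⟩
    have hkK : k ∈ K := by
      by_contra hkn
      have := hN0 hkn
      omega
    intro w hw
    exact hSsub (Set.mem_biUnion hkK hw)

theorem exists_raw (hX : ∃ F : FoliageTree X, F.IsPiTree) :
    ∃ R : Raw X, R.Grows := by
  obtain ⟨F, h⟩ := hX
  obtain ⟨e⟩ := h.1.2.2.1
  exact ⟨transport F e h, transport_grows F e h⟩

end PiWork
namespace PiWork
open Set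

lemma getD_append_lt (u : List ℕ) (k : ℕ) (i : ℕ) (h : i < u.length) :
    (u ++ [k]).getD i 0 = u.getD i 0 := by
  rw [List.getD_eq_getElem?_getD, List.getD_eq_getElem?_getD, List.getElem?_append_left h]

lemma getD_append_len (u : List ℕ) (k : ℕ) : (u ++ [k]).getD u.length 0 = k := by
  rw [List.getD_eq_getElem?_getD, List.getElem?_append_right (le_refl _)]
  simp

lemma getD_pre (x : ℕ → ℕ) (n i : ℕ) (h : i < n) : (pre x n).getD i 0 = x i := by
  have h2 : i < (pre x n).length := by rw [pre_length]; exact h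
  rw [List.getD_eq_getElem _ _ h2]
  simp [pre]

/-- the cylinder tree on Baire space -/
def rawN : Raw (ℕ → ℕ) where
  L u := {f | ∀ i, i < u.length → f i = u.getD i 0}
  opn u := by
    show IsOpen {f : ℕ → ℕ | ∀ i, i < u.length → f i = u.getD i 0}
    have : {f : ℕ → ℕ | ∀ i, i < u.length → f i = u.getD i 0}
        = ⋂ i ∈ Finset.range u.length, (fun f : ℕ → ℕ => f i) ⁻¹' {u.getD i 0} := by
      ext f
      simp [Set.mem_iInter]
    rw [this]
    exact isOpen_biInter_finset (fun i _ =>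
      (continuous_apply i).isOpen_preimage _ (isOpen_discrete _))
  uni u := by
    ext f
    simp only [Set.mem_iUnion, Set.mem_setOf_eq]
    constructor
    · intro hf
      refine ⟨f u.length, fun i hi => ?_⟩
      simp only [List.length_append, List.length_cons, List.length_nil] at hi
      rcases Nat.lt_or_ge i u.length with h | h
      · rw [getD_append_lt u _ i h]
        exact hf i h
      · have : i = u.length := by omega
        subst this
        rw [getD_append_len]
    · rintro ⟨k, hk⟩ i hi
      rw [← getD_append_lt u k i hi]
      exact hk i (by simp; omega)
  dis u j k hjk := by
    rw [Set.disjoint_left]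
    intro f hf hg
    have h1 := hf u.length (by simp)
    have h2 := hg u.length (by simp)
    rw [getD_append_len] at h1 h2
    exact hjk (h1 ▸ h2 ▸ rfl)
  rt := by
    ext f
    simp
  int x := by
    refine ⟨x, ?_⟩
    ext f
    simp only [Set.mem_iInter, Set.mem_setOf_eq, Set.mem_singleton_iff]
    constructor
    · intro hf
      funext i
      have := hf (i+1) i (by rw [pre_length]; omega)
      rwa [getD_pre x (i+1) i (by omega)] at this
    · rintro rfl n i hi
      rw [pre_length] at hi
      exact (getD_pre _ n i hi).symm

lemma rawN_dia2 : rawN.Dia2 := by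
  intro q W hW
  rw [nhds_pi] at hW
  obtain ⟨I, hIfin, t, ht, hsub⟩ := Filter.mem_pi.mp hW
  obtain ⟨N0, hN0⟩ := hIfin.bddAbove
  refine ⟨N0 + 1, fun b hqb hlen _ => ⟨0, fun k k' _ _ => ?_⟩⟩
  have hsb : rawN.L (b ++ [k] ++ [k']) ⊆ rawN.L b :=
    (rawN.step_subset (b ++ [k]) k').trans (rawN.step_subset b k)
  refine hsb.trans ?_
  intro f hf
  refine hsub ?_
  intro i hi
  have hiN : i < b.length := by
    have := hN0 hi
    omega
  have h1 : f i = b.getD i 0 := hf i hiN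
  have h2 : q i = b.getD i 0 := hqb i hiN
  rw [h1, ← h2]
  exact mem_of_mem_nhds (ht i)

end PiWork
namespace PiWork
open Set

/-! ### Sorgenfrey line basics -/

lemma sorg_isOpen_Ico (a b : ℝ) : @IsOpen SorgLine _ ((Set.Ico a b : Set ℝ)) :=
  TopologicalSpace.isOpen_generateFrom_of_mem ⟨a, b, rfl⟩

lemma sorg_isOpen_univ' : IsOpen (Set.univ : Set SorgLine) := isOpen_univ

lemma sorg_nhds {q : ℝ} {W : Set ℝ} (hW : W ∈ @nhds SorgLine _ q) :
    ∃ d : ℝ, q < d ∧ Set.Ico q d ⊆ W := by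
  obtain ⟨S, hSW, hSopen, hqS⟩ := mem_nhds_iff.mp hW
  have key : ∀ T : Set ℝ, TopologicalSpace.GenerateOpen {s : Set ℝ | ∃ a b : ℝ, s = Set.Ico a b} T →
      ∀ r : ℝ, r ∈ T → ∃ d : ℝ, r < d ∧ Set.Ico r d ⊆ T := by
    intro T hT
    induction hT with
    | basic s hs =>
      obtain ⟨a, b, rfl⟩ := hs
      intro r hr
      exact ⟨b, hr.2, fun y hy => ⟨le_trans hr.1 hy.1, hy.2⟩⟩
    | univ =>
      intro r _
      exact ⟨r + 1, by linarith, fun y _ => trivial⟩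
    | inter s t _ _ ihs iht =>
      rintro r ⟨hrs, hrt⟩
      obtain ⟨d1, hd1, hs1⟩ := ihs r hrs
      obtain ⟨d2, hd2, hs2⟩ := iht r hrt
      refine ⟨min d1 d2, lt_min hd1 hd2, fun y hy => ?_⟩
      exact ⟨hs1 ⟨hy.1, lt_of_lt_of_le hy.2 (min_le_left _ _)⟩,
        hs2 ⟨hy.1, lt_of_lt_of_le hy.2 (min_le_right _ _)⟩⟩
    | sUnion S _ ih =>
      rintro r ⟨s, hsS, hrs⟩
      obtain ⟨d, hd, hsub⟩ := ih s hsS r hrs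
      exact ⟨d, hd, fun y hy => ⟨s, hsS, hsub hy⟩⟩
  obtain ⟨d, hd, hsub⟩ := key S hSopen q hqS
  exact ⟨d, hd, fun y hy => hSW (hsub hy)⟩

/-! ### interval splitting -/

noncomputable def intEq : ℕ ≃ ℤ := (Denumerable.eqv ℤ).symm

/-- the k-th division point of `[a,b)` -/
noncomputable def tt (a b : ℝ) (k : ℕ) : ℝ := b - (b - a) / 2 ^ k

lemma tt_zero (a b : ℝ) : tt a b 0 = a := by simp [tt]

lemma tt_lt {a b : ℝ} (h : a < b) (k : ℕ) : tt a b k < b := by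
  have h2 : (0:ℝ) < 2 ^ k := by positivity
  have hba : (0:ℝ) < b - a := by linarith
  have h3 : (0:ℝ) < (b - a) / 2 ^ k := div_pos hba h2
  simp only [tt]
  linarith

lemma tt_succ_lt {a b : ℝ} (h : a < b) (k : ℕ) : tt a b k < tt a b (k+1) := by
  simp only [tt, sub_lt_sub_iff_left]
  rw [div_lt_div_iff₀ (by positivity) (by positivity)]
  have h2 : (0:ℝ) < 2 ^ k := by positivity
  have h3 : (2:ℝ) ^ (k+1) = 2 * 2 ^ k := by ring
  rw [h3]
  nlinarith

lemma tt_mono {a b : ℝ} (h : a < b) : StrictMono (tt a b) :=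
  strictMono_nat_of_lt_succ (tt_succ_lt h)

lemma tt_ge {a b : ℝ} (h : a < b) (k : ℕ) : a ≤ tt a b k := by
  have h0 := (tt_mono h).monotone (Nat.zero_le k)
  rwa [tt_zero] at h0

lemma tt_tendsto {a b : ℝ} (h : a < b) {x : ℝ} (hx : x < b) : ∃ k, x < tt a b k := by
  rcases le_or_gt x a with hxa | hxa
  · refine ⟨1, lt_of_le_of_lt hxa ?_⟩
    have h0 := tt_succ_lt h 0
    rwa [tt_zero] at h0
  · have hba : (0:ℝ) < b - a := by linarith
    have hbx : (0:ℝ) < b - x := by linarith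
    obtain ⟨k, hk⟩ := exists_pow_lt_of_lt_one (show (0:ℝ) < (b-x)/(b-a) by positivity)
      (show (1:ℝ)/2 < 1 by norm_num)
    refine ⟨k, ?_⟩
    have h2 : ((1:ℝ)/2) ^ k = 1 / 2 ^ k := by
      rw [div_pow, one_pow]
    rw [h2, div_lt_div_iff₀ (by positivity) hba] at hk
    simp only [tt]
    have h3 : (b - a) / 2 ^ k < b - x := by
      rw [div_lt_iff₀ (by positivity : (0:ℝ) < 2 ^ k)]
      nlinarith [pow_pos (show (0:ℝ) < 2 by norm_num) k]
    linarith

lemma tt_cover {a b : ℝ} (h : a < b) {x : ℝ} (hx : x ∈ Set.Ico a b) :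
    ∃ k, x ∈ Set.Ico (tt a b k) (tt a b (k+1)) := by
  have hex : ∃ k, x < tt a b (k+1) := by
    obtain ⟨k, hk⟩ := tt_tendsto h hx.2
    exact ⟨k, lt_of_lt_of_le hk ((tt_mono h).monotone (Nat.le_succ k))⟩
  set j := Nat.find hex with hj
  refine ⟨j, ?_, Nat.find_spec hex⟩
  rcases Nat.eq_zero_or_pos j with hj0 | hj0
  · rw [hj0, tt_zero]
    exact hx.1
  · have hm := Nat.find_min hex (m := j - 1) (by omega)
    push_neg at hm
    have hjj : j - 1 + 1 = j := by omega
    rwa [hjj] at hm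

/-! ### the Sorgenfrey raw tree -/

noncomputable def sstep : Option (ℝ × ℝ) → ℕ → Option (ℝ × ℝ)
  | none, k => some ((intEq k : ℤ), (intEq k : ℤ) + 1)
  | some (a, b), k => some (tt a b k, tt a b (k+1))

noncomputable def sdec (u : List ℕ) : Option (ℝ × ℝ) := u.foldl sstep none

def sleaf : Option (ℝ × ℝ) → Set ℝ
  | none => Set.univ
  | some (a, b) => Set.Ico a b

lemma sdec_append (u : List ℕ) (k : ℕ) : sdec (u ++ [k]) = sstep (sdec u) k := by
  simp [sdec, List.foldl_append]

lemma sdec_nil : sdec [] = none := rfl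

lemma sstep_ne_none (s : Option (ℝ × ℝ)) (k : ℕ) : sstep s k ≠ none := by
  cases s with
  | none => simp [sstep]
  | some ab =>
    obtain ⟨a, b⟩ := ab
    simp [sstep]

lemma sdec_eq_none {u : List ℕ} (h : sdec u = none) : u = [] := by
  induction u using List.reverseRecOn with
  | nil => rfl
  | append_singleton w k ih =>
    rw [sdec_append] at h
    exact absurd h (sstep_ne_none _ _)

lemma sdec_lt (u : List ℕ) : ∀ a b, sdec u = some (a, b) → a < b := by
  induction u using List.reverseRecOn with
  | nil => intro a b h; simp [sdec_nil] at h
  | append_singleton w k ih =>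
    intro a b h
    rw [sdec_append] at h
    cases hw : sdec w with
    | none =>
      rw [hw] at h
      simp only [sstep, Option.some.injEq, Prod.mk.injEq] at h
      obtain ⟨h1, h2⟩ := h
      rw [← h1, ← h2]
      linarith
    | some cd =>
      obtain ⟨c, d⟩ := cd
      rw [hw] at h
      simp only [sstep, Option.some.injEq, Prod.mk.injEq] at h
      obtain ⟨h1, h2⟩ := h
      rw [← h1, ← h2]
      exact tt_succ_lt (ih c d hw) k

lemma sdec_len (u : List ℕ) :
    ∀ a b, sdec u = some (a, b) → b - a ≤ 2 * (1/2 : ℝ) ^ u.length := by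
  induction u using List.reverseRecOn with
  | nil => intro a b h; simp [sdec_nil] at h
  | append_singleton w k ih =>
    intro a b h
    rw [sdec_append] at h
    cases hw : sdec w with
    | none =>
      rw [hw] at h
      simp only [sstep, Option.some.injEq, Prod.mk.injEq] at h
      obtain ⟨h1, h2⟩ := h
      have hw0 := sdec_eq_none hw
      subst hw0
      rw [← h1, ← h2]
      have he : ((intEq k : ℤ) : ℝ) + 1 - ((intEq k : ℤ) : ℝ) = 1 := by ring
      rw [he]
      norm_num
    | some cd =>
      obtain ⟨c, d⟩ := cd
      rw [hw] at h
      simp only [sstep, Option.some.injEq, Prod.mk.injEq] at h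
      obtain ⟨h1, h2⟩ := h
      have hcd : c < d := sdec_lt w c d hw
      have hlen := ih c d hw
      rw [← h1, ← h2]
      have he : tt c d (k+1) - tt c d k = (d - c) / 2 ^ (k+1) := by
        simp only [tt]
        field_simp
        ring
      rw [he]
      have h2k : (d - c) / 2 ^ (k+1) ≤ (d - c) / 2 := by
        have h21 : (2:ℝ) ≤ 2 ^ (k+1) := by
          calc (2:ℝ) = 2^1 := by norm_num
            _ ≤ 2^(k+1) := by
              apply pow_le_pow_right₀ (by norm_num)
              omega
        have hdc : (0:ℝ) ≤ d - c := by linarith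
        exact div_le_div_of_nonneg_left hdc (by norm_num) h21
      calc (d - c) / 2 ^ (k+1) ≤ (d - c) / 2 := h2k
        _ ≤ (2 * (1/2:ℝ) ^ w.length) / 2 := by linarith
        _ = 2 * (1/2:ℝ) ^ (w.length + 1) := by ring
        _ = 2 * (1/2:ℝ) ^ (w ++ [k]).length := by simp

end PiWork
namespace PiWork
open Set

noncomputable def rawS : Raw SorgLine where
  L u := sleaf (sdec u)
  opn u := by
    show @IsOpen SorgLine _ (sleaf (sdec u))
    cases h : sdec u with
    | none => exact sorg_isOpen_univ'
    | some ab => exact sorg_isOpen_Ico ab.1 ab.2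
  uni u := by
    show sleaf (sdec u) = ⋃ k, sleaf (sdec (u ++ [k]))
    have hstep : ∀ k, sdec (u ++ [k]) = sstep (sdec u) k := fun k => sdec_append u k
    cases h : sdec u with
    | none =>
      ext y
      simp only [sleaf, Set.mem_univ, true_iff, Set.mem_iUnion]
      refine ⟨intEq.symm ⌊y⌋, ?_⟩
      rw [hstep, h]
      simp only [sstep, sleaf, Equiv.apply_symm_apply]
      exact ⟨Int.floor_le y, by push_cast; linarith [Int.lt_floor_add_one y]⟩
    | some ab =>
      obtain ⟨a, b⟩ := ab
      have hab : a < b := sdec_lt u a b h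
      ext y
      simp only [sleaf, Set.mem_iUnion]
      constructor
      · intro hy
        obtain ⟨k, hk⟩ := tt_cover hab hy
        refine ⟨k, ?_⟩
        rw [hstep, h]
        simpa [sstep, sleaf] using hk
      · rintro ⟨k, hk⟩
        rw [hstep, h] at hk
        simp only [sstep, sleaf] at hk
        exact ⟨le_trans (tt_ge hab k) hk.1, lt_trans hk.2 (tt_lt hab (k+1))⟩
  dis u j k hjk := by
    show Disjoint (sleaf (sdec (u ++ [j]))) (sleaf (sdec (u ++ [k])))
    rw [sdec_append, sdec_append]
    cases h : sdec u with
    | none =>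
      simp only [sstep, sleaf]
      have hzz : (intEq j : ℤ) ≠ (intEq k : ℤ) := fun hc => hjk (intEq.injective hc)
      rw [Set.disjoint_left]
      rintro y ⟨h1y, h2y⟩ ⟨h3y, h4y⟩
      rcases lt_or_gt_of_ne hzz with hlt | hlt
      · have h5 : (intEq j : ℤ) + 1 ≤ (intEq k : ℤ) := hlt
        have h6 : ((intEq j : ℤ) : ℝ) + 1 ≤ ((intEq k : ℤ) : ℝ) := by exact_mod_cast h5
        linarith
      · have h5 : (intEq k : ℤ) + 1 ≤ (intEq j : ℤ) := hlt
        have h6 : ((intEq k : ℤ) : ℝ) + 1 ≤ ((intEq j : ℤ) : ℝ) := by exact_mod_cast h5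
        linarith
    | some ab =>
      obtain ⟨a, b⟩ := ab
      have hab : a < b := sdec_lt u a b h
      simp only [sstep, sleaf]
      rw [Set.disjoint_left]
      rintro y ⟨h1y, h2y⟩ ⟨h3y, h4y⟩
      rcases lt_or_gt_of_ne hjk with hlt | hlt
      · have : tt a b (j+1) ≤ tt a b k := (tt_mono hab).monotone (by omega)
        linarith
      · have : tt a b (k+1) ≤ tt a b j := (tt_mono hab).monotone (by omega)
        linarith
  rt := rfl
  int x := by
    show ∃ z, ⋂ n, sleaf (sdec (pre x n)) = {z}
    have hsome : ∀ n, ∃ ab : ℝ × ℝ, sdec (pre x (n+1)) = some ab := by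
      intro n
      rw [pre_succ, sdec_append]
      cases h : sdec (pre x n) with
      | none => exact ⟨_, rfl⟩
      | some cd =>
        obtain ⟨c, d⟩ := cd
        exact ⟨_, rfl⟩
    choose AB hABfull using hsome
    set A : ℕ → ℝ := fun n => (AB n).1 with hdefA
    set B : ℕ → ℝ := fun n => (AB n).2 with hdefB
    have hAB' : ∀ n, sdec (pre x (n+1)) = some (A n, B n) := fun n => hABfull n
    have hab : ∀ n, A n < B n := fun n => sdec_lt _ _ _ (hAB' n)
    have hlen : ∀ n, B n - A n ≤ 2 * (1/2:ℝ) ^ (n+1) := by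
      intro n
      have h2 := sdec_len (pre x (n+1)) _ _ (hAB' n)
      rwa [pre_length] at h2
    have hstep2 : ∀ n, A (n+1) = tt (A n) (B n) (x (n+1)) ∧
        B (n+1) = tt (A n) (B n) (x (n+1) + 1) := by
      intro n
      have h1 := hAB' (n+1)
      rw [pre_succ, sdec_append, hAB' n] at h1
      simp only [sstep, Option.some.injEq, Prod.mk.injEq] at h1
      exact ⟨h1.1.symm, h1.2.symm⟩
    have hAmono : Monotone A := by
      apply monotone_nat_of_le_succ
      intro n
      rw [(hstep2 n).1]
      exact tt_ge (hab n) _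
    have hBanti : ∀ n, B (n+1) < B n := by
      intro n
      rw [(hstep2 n).2]
      exact tt_lt (hab n) _
    have hBanti' : StrictAnti B := strictAnti_nat_of_succ_lt hBanti
    have hcross : ∀ m n, A m < B n := by
      intro m n
      rcases le_total m n with h | h
      · exact lt_of_le_of_lt (hAmono h) (hab n)
      · exact lt_of_lt_of_le (hab m) (hBanti'.antitone h)
    have hbdd : BddAbove (Set.range A) := by
      refine ⟨B 0, ?_⟩
      rintro y ⟨m, rfl⟩
      exact le_of_lt (hcross m 0)
    set q : ℝ := ⨆ n, A n with hq
    have hAq : ∀ n, A n ≤ q := fun n => le_ciSup hbdd n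
    have hqB : ∀ n, q < B n := by
      intro n
      have h2 : q ≤ B (n+1) := ciSup_le (fun m => le_of_lt (hcross m (n+1)))
      exact lt_of_le_of_lt h2 (hBanti n)
    refine ⟨q, ?_⟩
    ext y
    simp only [Set.mem_iInter, Set.mem_singleton_iff]
    constructor
    · intro hy
      have hyn : ∀ n, y ∈ Set.Ico (A n) (B n) := by
        intro n
        have h2 := hy (n+1)
        rwa [hAB' n] at h2
      by_contra hne
      have habs : (0:ℝ) < |y - q| := abs_pos.mpr (sub_ne_zero.mpr hne)
      obtain ⟨m, hm⟩ := exists_pow_lt_of_lt_one habs (show (1:ℝ)/2 < 1 by norm_num)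
      have h1 : |y - q| < B (m+1) - A (m+1) := by
        have hy1 := hyn (m+1)
        have hq1 : q ∈ Set.Ico (A (m+1)) (B (m+1)) := ⟨hAq (m+1), hqB (m+1)⟩
        rw [abs_sub_lt_iff]
        constructor
        · linarith [hy1.1, hy1.2, hq1.1, hq1.2]
        · linarith [hy1.1, hy1.2, hq1.1, hq1.2]
      have h2 : B (m+1) - A (m+1) ≤ 2 * (1/2:ℝ) ^ (m+2) := hlen (m+1)
      have h3 : 2 * (1/2:ℝ) ^ (m+2) = (1/2:ℝ)^(m+1) := by ring
      have h4 : ((1:ℝ)/2)^(m+1) ≤ (1/2:ℝ)^m := by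
        apply pow_le_pow_of_le_one (by norm_num) (by norm_num)
        omega
      linarith
    · rintro rfl
      intro n
      rcases Nat.eq_zero_or_pos n with rfl | hn
      · show q ∈ sleaf (sdec (pre x 0))
        have : pre x 0 = [] := rfl
        rw [this, sdec_nil]
        trivial
      · obtain ⟨m, rfl⟩ := Nat.exists_eq_add_of_lt hn
        have h2 : 0 + m + 1 = m + 1 := by omega
        rw [h2]
        show q ∈ sleaf (sdec (pre x (m+1)))
        rw [hAB' m]
        exact ⟨hAq m, hqB m⟩

lemma rawS_dia2 : rawS.Dia2 := by
  intro q0 W hW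
  have hW' : W ∈ @nhds SorgLine _ q0 := hW
  set q : ℝ := q0 with hq0
  obtain ⟨d, hqd, hsub⟩ := sorg_nhds (q := q) hW'
  have hdq : (0:ℝ) < d - q := by linarith
  obtain ⟨Lv0, hLv0⟩ := exists_pow_lt_of_lt_one hdq (show (1:ℝ)/2 < 1 by norm_num)
  refine ⟨Lv0 + 1, fun b hqb hlen _ => ?_⟩
  -- the state of b
  have hbne : b ≠ [] := by
    intro hb
    rw [hb] at hlen
    simp at hlen
  obtain ⟨v, j, rfl⟩ := (List.eq_nil_or_concat b).resolve_left hbne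
  rw [List.concat_eq_append] at hqb hlen ⊢
  cases hs : sdec (v ++ [j]) with
  | none => exact absurd (sdec_eq_none hs) (by simp)
  | some ab =>
    obtain ⟨a, bb⟩ := ab
    have hab : a < bb := sdec_lt _ _ _ hs
    have hqmem : q ∈ Set.Ico a bb := by
      have h7 : q ∈ sleaf (sdec (v ++ [j])) := hqb
      rwa [hs] at h7
    have hlenb : bb - a ≤ 2 * (1/2:ℝ) ^ (v ++ [j]).length := sdec_len _ _ _ hs
    have hsmall : bb - a ≤ (1/2:ℝ) ^ Lv0 := by
      have h2 : (2:ℝ) * (1/2)^(v ++ [j]).length ≤ 2 * (1/2)^(Lv0+1) := by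
        have := pow_le_pow_of_le_one (show (0:ℝ) ≤ 1/2 by norm_num)
          (show (1:ℝ)/2 ≤ 1 by norm_num) hlen
        linarith
      have h3 : (2:ℝ) * (1/2)^(Lv0+1) = (1/2)^Lv0 := by ring
      linarith
    have hbd : bb ≤ d := by
      have : bb - a < d - q := lt_of_le_of_lt hsmall hLv0
      have := hqmem.1
      linarith
    -- tail of sons inside [q, d)
    have hqbb : q < bb := hqmem.2
    obtain ⟨N, hN⟩ := tt_tendsto hab hqbb
    refine ⟨N, fun k k' hk hk' => ?_⟩
    have hsonsub : sleaf (sdec (v ++ [j] ++ [k] ++ [k'])) ⊆ sleaf (sdec (v ++ [j] ++ [k])) := by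
      rw [sdec_append (v ++ [j] ++ [k]) k']
      cases hs2 : sdec (v ++ [j] ++ [k]) with
      | none => exact absurd (sdec_eq_none hs2) (by simp)
      | some cd =>
        obtain ⟨c, dd⟩ := cd
        have hcd : c < dd := sdec_lt _ _ _ hs2
        simp only [sstep, sleaf]
        intro y hy
        exact ⟨le_trans (tt_ge hcd k') hy.1, lt_trans hy.2 (tt_lt hcd (k'+1))⟩
    refine hsonsub.trans ?_
    rw [sdec_append (v ++ [j]) k, hs]
    simp only [sstep, sleaf]
    intro y hy
    refine hsub ⟨?_, ?_⟩
    · have h5 : tt a bb N ≤ tt a bb k := (tt_mono hab).monotone hk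
      have := hy.1
      linarith [le_of_lt hN]
    · have h6 : tt a bb (k+1) < bb := tt_lt hab (k+1)
      have := hy.2
      linarith

end PiWork
namespace PiWork
open Set

/-- intersecting along a cofinal subsequence of a decreasing family -/
lemma subseq_iInter {Z : Type*} (s : ℕ → Set Z) (hanti : ∀ n, s (n+1) ⊆ s n)
    (φ : ℕ → ℕ) (hφ : ∀ n, n ≤ φ n) : ⋂ n, s (φ n) = ⋂ n, s n := by
  have hmono : ∀ m n, n ≤ m → s m ⊆ s n := by
    intro m n h
    induction m with
    | zero => have : n = 0 := by omega
              rw [this]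
    | succ m ih =>
      rcases Nat.lt_or_ge n (m+1) with h2 | h2
      · exact (hanti m).trans (ih (by omega))
      · have : n = m + 1 := by omega
        rw [this]
  apply Set.Subset.antisymm
  · intro z hz
    rw [Set.mem_iInter] at hz ⊢
    intro n
    exact hmono (φ n) n (hφ n) (hz n)
  · intro z hz
    rw [Set.mem_iInter] at hz ⊢
    intro n
    exact hz (φ n)

/-! ### the master product construction -/

def TriP (n : ℕ) (v : ℕ × ℕ × ℕ) : Prop :=
  (n ≤ v.1 ∧ n ≤ v.2.1 ∧ n ≤ v.2.2) ∧ (v.1 = n ∨ v.2.1 = n ∨ v.2.2 = n)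

instance (n : ℕ) : DecidablePred (TriP n) := fun v => by
  unfold TriP
  infer_instance

lemma triP_infinite (n : ℕ) : Function.Injective
    (fun t : ℕ => (⟨(n, n + t, n), ⟨⟨le_refl n, Nat.le_add_right n t, le_refl n⟩,
      Or.inl rfl⟩⟩ : {v // TriP n v})) := by
  intro a b hab
  have := congrArg (fun w : {v // TriP n v} => w.val.2.1) hab
  simpa using this

instance (n : ℕ) : Infinite {v // TriP n v} := Infinite.of_injective _ (triP_infinite n)

noncomputable def tripleEquiv (n : ℕ) : ℕ ≃ {v // TriP n v} := by
  classical
  letI : Denumerable {v // TriP n v} := Denumerable.ofEncodableOfInfinite _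
  exact (Denumerable.eqv _).symm

lemma triP_min (i k k' : ℕ) : TriP (min i (min k k')) (i, k, k') := by
  constructor
  · exact ⟨min_le_left _ _, le_trans (min_le_right _ _) (min_le_left _ _),
      le_trans (min_le_right _ _) (min_le_right _ _)⟩
  · rcases Nat.le_total i (min k k') with h | h
    · left; simp [min_eq_left h]
    · rcases Nat.le_total k k' with h2 | h2
      · right; left
        rw [min_eq_right h, min_eq_left h2]
      · right; right
        rw [min_eq_right h, min_eq_right h2]

lemma triP_unique {n n' : ℕ} {v : ℕ × ℕ × ℕ} (h : TriP n v) (h' : TriP n' v) : n = n' := by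
  obtain ⟨⟨h1, h2, h3⟩, h4⟩ := h
  obtain ⟨⟨h1', h2', h3'⟩, h4'⟩ := h'
  rcases h4 with rfl | rfl | rfl <;> rcases h4' with h5 | h5 | h5 <;> omega

variable {X : Type u} {Y : Type v} [TopologicalSpace X] [TopologicalSpace Y]

inductive MS where
  | rect (a b : List ℕ)
  | piece (a b : List ℕ) (n : ℕ)

noncomputable def mstep : MS → ℕ → MS
  | .rect a b, n => .piece a b n
  | .piece a b n, c =>
      .rect (a ++ [((tripleEquiv n) c).val.1])
        (b ++ [((tripleEquiv n) c).val.2.1] ++ [((tripleEquiv n) c).val.2.2])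

noncomputable def mdec (u : List ℕ) : MS := u.foldl mstep (.rect [] [])

def mleaf (RF : Raw X) (RG : Raw Y) : MS → Set (X × Y)
  | .rect a b => RF.L a ×ˢ RG.L b
  | .piece a b n => ⋃ v : {v // TriP n v},
      RF.L (a ++ [v.val.1]) ×ˢ RG.L (b ++ [v.val.2.1] ++ [v.val.2.2])

lemma mdec_append (u : List ℕ) (k : ℕ) : mdec (u ++ [k]) = mstep (mdec u) k := by
  simp [mdec, List.foldl_append]

lemma mleaf_step_subset (RF : Raw X) (RG : Raw Y) (s : MS) (c : ℕ) :
    mleaf RF RG (mstep s c) ⊆ mleaf RF RG s := by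
  cases s with
  | rect a b =>
    show mleaf RF RG (.piece a b c) ⊆ RF.L a ×ˢ RG.L b
    refine Set.iUnion_subset (fun v => ?_)
    refine Set.prod_mono ?_ ?_
    · exact RF.step_subset a _
    · exact (RG.step_subset (b ++ [v.val.2.1]) _).trans (RG.step_subset b _)
  | piece a b n =>
    show _ ×ˢ _ ⊆ mleaf RF RG (.piece a b n)
    exact Set.subset_iUnion
      (fun v : {v // TriP n v} =>
        RF.L (a ++ [v.val.1]) ×ˢ RG.L (b ++ [v.val.2.1] ++ [v.val.2.2]))
      ((tripleEquiv n) c)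

/-- the product raw tree -/
noncomputable def master (RF : Raw X) (RG : Raw Y) : Raw (X × Y) where
  L u := mleaf RF RG (mdec u)
  opn u := by
    show IsOpen (mleaf RF RG (mdec u))
    cases h : mdec u with
    | rect a b => exact (RF.opn a).prod (RG.opn b)
    | piece a b n =>
      exact isOpen_iUnion (fun v => (RF.opn _).prod (RG.opn _))
  uni u := by
    show mleaf RF RG (mdec u) = ⋃ k, mleaf RF RG (mdec (u ++ [k]))
    have hstep : ∀ k, mdec (u ++ [k]) = mstep (mdec u) k := fun k => mdec_append u k
    cases h : mdec u with
    | rect a b =>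
      ext z
      simp only [Set.mem_iUnion]
      constructor
      · intro hz
        obtain ⟨hz1, hz2⟩ := hz
        have h1 : z.1 ∈ ⋃ i, RF.L (a ++ [i]) := by rw [← RF.uni]; exact hz1
        have h2 : z.2 ∈ ⋃ k, RG.L (b ++ [k]) := by rw [← RG.uni]; exact hz2
        obtain ⟨i, hi⟩ := Set.mem_iUnion.mp h1
        obtain ⟨k, hk⟩ := Set.mem_iUnion.mp h2
        have h3 : z.2 ∈ ⋃ k', RG.L (b ++ [k] ++ [k']) := by rw [← RG.uni]; exact hk
        obtain ⟨k', hk'⟩ := Set.mem_iUnion.mp h3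
        refine ⟨min i (min k k'), ?_⟩
        rw [hstep, h]
        show z ∈ mleaf RF RG (.piece a b _)
        exact Set.mem_iUnion.mpr ⟨⟨(i, k, k'), triP_min i k k'⟩, ⟨hi, hk'⟩⟩
      · rintro ⟨k, hk⟩
        rw [hstep, h] at hk
        exact mleaf_step_subset RF RG (.rect a b) k hk
    | piece a b n =>
      ext z
      simp only [Set.mem_iUnion]
      constructor
      · intro hz
        obtain ⟨v, hv⟩ := Set.mem_iUnion.mp hz
        refine ⟨(tripleEquiv n).symm v, ?_⟩
        rw [hstep, h]
        show z ∈ mleaf RF RG (mstep (.piece a b n) _)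
        simp only [mstep, Equiv.apply_symm_apply]
        exact hv
      · rintro ⟨c, hc⟩
        rw [hstep, h] at hc
        exact mleaf_step_subset RF RG (.piece a b n) c hc
  dis u j k hjk := by
    show Disjoint (mleaf RF RG (mdec (u ++ [j]))) (mleaf RF RG (mdec (u ++ [k])))
    rw [mdec_append, mdec_append]
    rw [Set.disjoint_left]
    cases h : mdec u with
    | rect a b =>
      intro z hzj hzk
      simp only [mstep, mleaf] at hzj hzk
      obtain ⟨v, hv⟩ := Set.mem_iUnion.mp hzj
      obtain ⟨w, hw⟩ := Set.mem_iUnion.mp hzk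
      have e1 : v.val.1 = w.val.1 := by
        by_contra hne
        exact Set.not_disjoint_iff.mpr ⟨z.1, hv.1, hw.1⟩ (RF.dis a hne)
      have e2 : v.val.2.1 = w.val.2.1 := by
        by_contra hne
        have hv2 : z.2 ∈ RG.L (b ++ [v.val.2.1]) := RG.step_subset _ _ hv.2
        have hw2 : z.2 ∈ RG.L (b ++ [w.val.2.1]) := RG.step_subset _ _ hw.2
        exact Set.not_disjoint_iff.mpr ⟨z.2, hv2, hw2⟩ (RG.dis b hne)
      have e3 : v.val.2.2 = w.val.2.2 := by
        by_contra hne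
        have hv2 := hv.2
        have hw2 := hw.2
        rw [e2] at hv2
        exact Set.not_disjoint_iff.mpr ⟨z.2, hv2, hw2⟩ (RG.dis (b ++ [w.val.2.1]) hne)
      have hvw : v.val = w.val := by
        rw [Prod.ext_iff]
        refine ⟨e1, ?_⟩
        rw [Prod.ext_iff]
        exact ⟨e2, e3⟩
      exact hjk (triP_unique (hvw ▸ v.prop) w.prop)
    | piece a b n =>
      intro z hzj hzk
      simp only [mstep, mleaf] at hzj hzk
      set v := ((tripleEquiv n) j).val with hvdef
      set w := ((tripleEquiv n) k).val with hwdef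
      have e1 : v.1 = w.1 := by
        by_contra hne
        exact Set.not_disjoint_iff.mpr ⟨z.1, hzj.1, hzk.1⟩ (RF.dis a hne)
      have e2 : v.2.1 = w.2.1 := by
        by_contra hne
        have hv2 : z.2 ∈ RG.L (b ++ [v.2.1]) := RG.step_subset _ _ hzj.2
        have hw2 : z.2 ∈ RG.L (b ++ [w.2.1]) := RG.step_subset _ _ hzk.2
        exact Set.not_disjoint_iff.mpr ⟨z.2, hv2, hw2⟩ (RG.dis b hne)
      have e3 : v.2.2 = w.2.2 := by
        by_contra hne
        have hv2 := hzj.2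
        have hw2 := hzk.2
        rw [e2] at hv2
        exact Set.not_disjoint_iff.mpr ⟨z.2, hv2, hw2⟩ (RG.dis (b ++ [w.2.1]) hne)
      apply hjk
      apply (tripleEquiv n).injective
      apply Subtype.ext
      show v = w
      rw [Prod.ext_iff]
      refine ⟨e1, ?_⟩
      rw [Prod.ext_iff]
      exact ⟨e2, e3⟩
  rt := by
    show mleaf RF RG (mdec []) = univ
    show RF.L [] ×ˢ RG.L [] = univ
    rw [RF.rt, RG.rt, Set.univ_prod_univ]
  int x := by
    show ∃ z, ⋂ n, mleaf RF RG (mdec (pre x n)) = {z}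
    set γ : ℕ → ℕ × ℕ × ℕ := fun m => ((tripleEquiv (x (2*m))) (x (2*m+1))).val with hγ
    set α : ℕ → ℕ := fun m => (γ m).1 with hα
    set β : ℕ → ℕ := fun j => if j % 2 = 0 then (γ (j/2)).2.1 else (γ (j/2)).2.2 with hβ
    have heven : ∀ m, mdec (pre x (2*m)) = .rect (pre α m) (pre β (2*m)) := by
      intro m
      induction m with
      | zero => rfl
      | succ m ih =>
        have h1 : 2 * (m+1) = (2*m + 1) + 1 := by omega
        rw [h1, pre_succ, pre_succ, mdec_append, mdec_append, ih]
        have h2 : mstep (MS.rect (pre α m) (pre β (2*m))) (x (2*m))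
            = .piece (pre α m) (pre β (2*m)) (x (2*m)) := rfl
        rw [h2]
        show MS.rect _ _ = _
        have hα1 : pre α (m+1) = pre α m ++ [(γ m).1] := pre_succ α m
        have hβ1 : pre β (2*m+1+1) = pre β (2*m) ++ [(γ m).2.1] ++ [(γ m).2.2] := by
          rw [pre_succ, pre_succ]
          have e2 : β (2*m) = (γ m).2.1 := by
            simp only [hβ]
            have hm0 : (2*m) % 2 = 0 := by omega
            rw [if_pos hm0]
            have hm1 : (2*m)/2 = m := by omega
            rw [hm1]
          have e3 : β (2*m+1) = (γ m).2.2 := by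
            simp only [hβ]
            have hm0 : (2*m+1) % 2 ≠ 0 := by omega
            rw [if_neg hm0]
            have hm1 : (2*m+1)/2 = m := by omega
            rw [hm1]
          rw [e2, e3]
        all_goals rw [hα1, hβ1]
        all_goals rfl
    have hanti : ∀ n, mleaf RF RG (mdec (pre x (n+1))) ⊆ mleaf RF RG (mdec (pre x n)) := by
      intro n
      rw [pre_succ, mdec_append]
      exact mleaf_step_subset RF RG _ _
    obtain ⟨px, hpx⟩ := RF.int α
    obtain ⟨qy, hqy⟩ := RG.int β
    refine ⟨(px, qy), ?_⟩
    rw [← subseq_iInter (fun n => mleaf RF RG (mdec (pre x n))) hanti (fun m => 2*m)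
      (fun m => by change m ≤ 2*m; omega)]
    have hre : ∀ m, mleaf RF RG (mdec (pre x (2*m))) = RF.L (pre α m) ×ˢ RG.L (pre β (2*m)) := by
      intro m
      rw [heven m]
      rfl
    have hG : ⋂ m, RG.L (pre β (2*m)) = {qy} := by
      rw [subseq_iInter (fun j => RG.L (pre β j)) (fun j => by
        change RG.L (pre β (j+1)) ⊆ RG.L (pre β j)
        rw [pre_succ]
        exact RG.step_subset _ _) (fun m => 2*m) (fun m => by change m ≤ 2*m; omega)]
      exact hqy
    ext z
    simp only [Set.mem_iInter, Set.mem_singleton_iff]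
    constructor
    · intro hz
      have h1 : z.1 ∈ ⋂ m, RF.L (pre α m) := by
        rw [Set.mem_iInter]
        intro m
        have := hz m
        rw [hre m] at this
        exact this.1
      have h2 : z.2 ∈ ⋂ m, RG.L (pre β (2*m)) := by
        rw [Set.mem_iInter]
        intro m
        have := hz m
        rw [hre m] at this
        exact this.2
      rw [hpx] at h1
      rw [hG] at h2
      obtain ⟨z1, z2⟩ := z
      simp only at h1 h2
      rw [h1, h2]
    · rintro rfl
      intro m
      rw [hre m]
      constructor
      · have : px ∈ ⋂ m, RF.L (pre α m) := by rw [hpx]; rfl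
        exact Set.mem_iInter.mp this m
      · have : qy ∈ ⋂ m, RG.L (pre β (2*m)) := by rw [hG]; rfl
        exact Set.mem_iInter.mp this m

lemma master_branch (RF : Raw X) (RG : Raw Y) (p : X) (q : Y) :
    ∀ m, ∃ (z : List ℕ) (a b : List ℕ), mdec z = .rect a b ∧ a.length = m ∧
      b.length = 2*m ∧ p ∈ RF.L a ∧ q ∈ RG.L b := by
  intro m
  induction m with
  | zero =>
    refine ⟨[], [], [], rfl, rfl, rfl, ?_, ?_⟩
    · rw [RF.rt]; trivial
    · rw [RG.rt]; trivial
  | succ m ih =>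
    obtain ⟨z, a, b, hdec, hal, hbl, hpa, hqb⟩ := ih
    have h1 : p ∈ ⋃ i, RF.L (a ++ [i]) := by rw [← RF.uni]; exact hpa
    obtain ⟨i, hi⟩ := Set.mem_iUnion.mp h1
    have h2 : q ∈ ⋃ k, RG.L (b ++ [k]) := by rw [← RG.uni]; exact hqb
    obtain ⟨k, hk⟩ := Set.mem_iUnion.mp h2
    have h3 : q ∈ ⋃ k', RG.L (b ++ [k] ++ [k']) := by rw [← RG.uni]; exact hk
    obtain ⟨k', hk'⟩ := Set.mem_iUnion.mp h3
    set n := min i (min k k') with hn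
    set c := (tripleEquiv n).symm ⟨(i, k, k'), triP_min i k k'⟩ with hc
    refine ⟨z ++ [n] ++ [c], a ++ [i], b ++ [k] ++ [k'], ?_, by simp [hal], by simp [hbl]; omega,
      hi, hk'⟩
    rw [mdec_append, mdec_append, hdec]
    show mstep (.piece a b n) c = _
    simp only [mstep, hc, Equiv.apply_symm_apply]
  
lemma master_grows (RF : Raw X) (RG : Raw Y) (hF : RF.Grows) (hG : RG.Dia2) :
    (master RF RG).Grows := by
  rintro ⟨p, q⟩ U hU
  rw [mem_nhds_prod_iff] at hU
  obtain ⟨V, hV, W, hW, hVW⟩ := hU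
  obtain ⟨Lv, hLv⟩ := hG q W hW
  obtain ⟨u, hpu, hul, N1, hN1⟩ := RF.growsDeep hF p V hV Lv
  obtain ⟨z, a, b, hdec, hal, hbl, hpa, hqb⟩ := master_branch RF RG p q u.length
  have hau : a = u := by
    have h1 := (RF.exists_unique_level p u.length).unique ⟨hal, hpa⟩ ⟨rfl, hpu⟩
    exact h1
  subst hau
  obtain ⟨N2, hN2⟩ := hLv b hqb (by omega) ⟨a.length, by omega⟩
  refine ⟨z, ?_, max N1 N2, ?_⟩
  · show (p, q) ∈ mleaf RF RG (mdec z)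
    rw [hdec]
    exact ⟨hpa, hqb⟩
  · intro c hc
    show mleaf RF RG (mdec (z ++ [c])) ⊆ U
    rw [mdec_append, hdec]
    show mleaf RF RG (.piece a b c) ⊆ U
    refine Set.iUnion_subset (fun v => ?_)
    refine subset_trans ?_ hVW
    refine Set.prod_mono ?_ ?_
    · apply hN1
      have := v.prop.1.1
      omega
    · apply hN2
      · have := v.prop.1.2.1
        omega
      · have := v.prop.1.2.2
        omega

end PiWork
namespace PiWork
open Set

/-- reusable tail lemma for the Sorgenfrey tree -/
lemma sorg_tail {q d : ℝ} (hqd : q < d) :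
    ∃ L0 : ℕ, ∀ u : List ℕ, q ∈ sleaf (sdec u) → L0 ≤ u.length →
      ∃ N, ∀ k, N ≤ k → sleaf (sdec (u ++ [k])) ⊆ Set.Ico q d := by
  have hdq : (0:ℝ) < d - q := by linarith
  obtain ⟨Lv0, hLv0⟩ := exists_pow_lt_of_lt_one hdq (show (1:ℝ)/2 < 1 by norm_num)
  refine ⟨Lv0 + 1, fun u hqu hlen => ?_⟩
  have hbne : u ≠ [] := by
    intro hb
    rw [hb] at hlen
    simp at hlen
  cases hs : sdec u with
  | none => exact absurd (sdec_eq_none hs) hbne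
  | some ab =>
    obtain ⟨a, bb⟩ := ab
    have hab : a < bb := sdec_lt _ _ _ hs
    have hqmem : q ∈ Set.Ico a bb := by
      have h7 : q ∈ sleaf (sdec u) := hqu
      rwa [hs] at h7
    have hlenb : bb - a ≤ 2 * (1/2:ℝ) ^ u.length := sdec_len _ _ _ hs
    have hsmall : bb - a ≤ (1/2:ℝ) ^ Lv0 := by
      have h2 : (2:ℝ) * (1/2)^u.length ≤ 2 * (1/2)^(Lv0+1) := by
        have := pow_le_pow_of_le_one (show (0:ℝ) ≤ 1/2 by norm_num)
          (show (1:ℝ)/2 ≤ 1 by norm_num) hlen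
        linarith
      have h3 : (2:ℝ) * (1/2)^(Lv0+1) = (1/2)^Lv0 := by ring
      linarith
    have hbd : bb ≤ d := by
      have h4 : bb - a < d - q := lt_of_le_of_lt hsmall hLv0
      have h5 := hqmem.1
      linarith
    obtain ⟨N, hN⟩ := tt_tendsto hab hqmem.2
    refine ⟨N, fun k hk => ?_⟩
    rw [sdec_append, hs]
    simp only [sstep, sleaf]
    intro y hy
    refine ⟨?_, ?_⟩
    · have h5 : tt a bb N ≤ tt a bb k := (tt_mono hab).monotone hk
      have h6 := hy.1
      linarith [le_of_lt hN]
    · have h6 : tt a bb (k+1) < bb := tt_lt hab (k+1)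
      have h7 := hy.2
      linarith

/-! ### cells for the ω-power tree -/

def VP (m n : ℕ) (l : List ℕ) : Prop :=
  l.length = m + 2 ∧ (∀ k ∈ l, n ≤ k) ∧ n ∈ l

instance (m n : ℕ) : DecidablePred (VP m n) := fun l => by
  unfold VP
  infer_instance

lemma vp_mk (m n t : ℕ) : VP m n (n :: (n+t) :: List.replicate m n) := by
  refine ⟨by simp, ?_, by simp⟩
  intro k hk
  rcases List.mem_cons.mp hk with h1 | hk
  · omega
  · rcases List.mem_cons.mp hk with h1 | hk
    · omega
    · have := List.eq_of_mem_replicate hk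
      omega

instance (m n : ℕ) : Infinite {l // VP m n l} := by
  apply Infinite.of_injective (fun t : ℕ => (⟨_, vp_mk m n t⟩ : {l // VP m n l}))
  intro a b hab
  have := congrArg (fun w : {l // VP m n l} => w.val.getD 1 0) hab
  simpa using this

noncomputable def vEquiv (m n : ℕ) : ℕ ≃ {l // VP m n l} := by
  classical
  letI : Denumerable {l // VP m n l} := Denumerable.ofEncodableOfInfinite _
  exact (Denumerable.eqv _).symm

lemma vp_unique {m n n' : ℕ} {l : List ℕ} (h : VP m n l) (h' : VP m n' l) : n = n' :=
  le_antisymm (h.2.1 n' h'.2.2) (h'.2.1 n h.2.2)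

lemma exists_list_min (l : List ℕ) (h : l ≠ []) : ∃ n, (∀ k ∈ l, n ≤ k) ∧ n ∈ l := by
  induction l with
  | nil => simp at h
  | cons a l ih =>
    rcases eq_or_ne l [] with rfl | hl
    · exact ⟨a, by simp, by simp⟩
    · obtain ⟨n, hn1, hn2⟩ := ih hl
      refine ⟨min a n, ?_, ?_⟩
      · intro k hk
        rcases List.mem_cons.mp hk with rfl | hk
        · exact min_le_left _ _
        · exact le_trans (min_le_right _ _) (hn1 k hk)
      · rcases le_total a n with h2 | h2
        · rw [min_eq_left h2]; simp
        · rw [min_eq_right h2]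
          exact List.mem_cons_of_mem _ hn2

lemma vp_getD_ge {m n : ℕ} {l : List ℕ} (h : VP m n l) (i : ℕ) (hi : i < m + 2) :
    n ≤ l.getD i 0 := by
  apply h.2.1
  have hl : i < l.length := by rw [h.1]; exact hi
  rw [List.getD_eq_getElem _ _ hl]
  exact List.getElem_mem hl

/-! ### the ω-power Sorgenfrey tree -/

inductive GS where
  | rect (βs : List (List ℕ))
  | piece (βs : List (List ℕ)) (n : ℕ)

def gnext (βs : List (List ℕ)) (l : List ℕ) : List (List ℕ) :=
  List.ofFn (fun i : Fin (βs.length + 2) => βs.getD i [] ++ [l.getD i 0])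

lemma gnext_length (βs : List (List ℕ)) (l : List ℕ) :
    (gnext βs l).length = βs.length + 2 := by simp [gnext]

lemma gnext_getD_lt (βs : List (List ℕ)) (l : List ℕ) {i : ℕ} (hi : i < βs.length + 2) :
    (gnext βs l).getD i [] = βs.getD i [] ++ [l.getD i 0] := by
  have hl : i < (List.ofFn (fun j : Fin (βs.length + 2) => βs.getD j [] ++ [l.getD j 0])).length := by
    simp; omega
  show (List.ofFn (fun j : Fin (βs.length + 2) => βs.getD j [] ++ [l.getD j 0])).getD i [] = _
  rw [List.getD_eq_getElem _ _ hl, List.getElem_ofFn]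

lemma gnext_getD_ge (βs : List (List ℕ)) (l : List ℕ) {i : ℕ} (hi : βs.length + 2 ≤ i) :
    (gnext βs l).getD i [] = [] := by
  apply List.getD_eq_default
  rw [gnext_length]
  exact hi

noncomputable def gstep : GS → ℕ → GS
  | .rect βs, n => .piece βs n
  | .piece βs n, c => .rect (gnext βs ((vEquiv βs.length n) c).val)

noncomputable def gdec (u : List ℕ) : GS := u.foldl gstep (.rect [])

def grleaf (βs : List (List ℕ)) : Set (ℕ → SorgLine) :=
  {y | ∀ i : ℕ, y i ∈ sleaf (sdec (βs.getD i []))}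

def gleaf : GS → Set (ℕ → SorgLine)
  | .rect βs => grleaf βs
  | .piece βs n => ⋃ l : {l // VP βs.length n l}, grleaf (gnext βs l.val)

lemma gdec_append (u : List ℕ) (k : ℕ) : gdec (u ++ [k]) = gstep (gdec u) k := by
  simp [gdec, List.foldl_append]

lemma grleaf_gnext_subset (βs : List (List ℕ)) (l : List ℕ) :
    grleaf (gnext βs l) ⊆ grleaf βs := by
  intro y hy i
  rcases Nat.lt_or_ge i (βs.length + 2) with hi | hi
  · have h2 := hy i
    rw [gnext_getD_lt βs l hi] at h2
    exact rawS.step_subset _ _ h2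
  · have h3 : βs.getD i [] = [] := List.getD_eq_default _ _ (by omega)
    rw [h3]
    trivial

lemma gleaf_step_subset (s : GS) (c : ℕ) : gleaf (gstep s c) ⊆ gleaf s := by
  cases s with
  | rect βs =>
    show gleaf (.piece βs c) ⊆ grleaf βs
    exact Set.iUnion_subset (fun l => grleaf_gnext_subset βs l.val)
  | piece βs n =>
    show grleaf _ ⊆ gleaf (.piece βs n)
    exact Set.subset_iUnion (fun l : {l // VP βs.length n l} => grleaf (gnext βs l.val))
      ((vEquiv βs.length n) c)

lemma grleaf_open (βs : List (List ℕ)) : IsOpen (grleaf βs) := by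
  have heq : grleaf βs
      = ⋂ i ∈ Finset.range βs.length, (fun y : ℕ → SorgLine => y i) ⁻¹' (sleaf (sdec (βs.getD i []))) := by
    ext y
    simp only [grleaf, Set.mem_setOf_eq, Set.mem_iInter, Finset.mem_range, Set.mem_preimage]
    constructor
    · intro h i _
      exact h i
    · intro h i
      rcases Nat.lt_or_ge i βs.length with hi | hi
      · exact h i hi
      · rw [List.getD_eq_default _ _ hi]
        trivial
  rw [heq]
  exact isOpen_biInter_finset (fun i _ =>
    (continuous_apply i).isOpen_preimage _ (rawS.opn _))

end PiWork
namespace PiWork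
open Set

def GOODr (βs : List (List ℕ)) : Prop :=
  2 ∣ βs.length ∧ ∀ i, i < βs.length → (βs.getD i []).length = βs.length/2 - i/2

lemma goodr_gnext {βs : List (List ℕ)} {l : List ℕ} (h : GOODr βs) : GOODr (gnext βs l) := by
  obtain ⟨h2, hc⟩ := h
  obtain ⟨m, hm⟩ := h2
  constructor
  · rw [gnext_length]
    exact ⟨m + 1, by omega⟩
  · intro i hi
    rw [gnext_length] at hi
    rw [gnext_getD_lt βs l hi, List.length_append, gnext_length]
    rcases Nat.lt_or_ge i βs.length with h3 | h3
    · rw [hc i h3]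
      simp only [List.length_cons, List.length_nil]
      omega
    · rw [List.getD_eq_default _ _ h3]
      simp only [List.length_nil, List.length_cons]
      omega

lemma gdec_struct (u : List ℕ) :
    (∃ βs, gdec u = .rect βs ∧ βs.length = u.length ∧ GOODr βs) ∨
    (∃ βs n, gdec u = .piece βs n ∧ βs.length + 1 = u.length ∧ GOODr βs) := by
  induction u using List.reverseRecOn with
  | nil =>
    left
    exact ⟨[], rfl, rfl, ⟨⟨0, rfl⟩, by simp⟩⟩
  | append_singleton w k ih =>
    rw [gdec_append]
    rcases ih with ⟨βs, hd, hl, hg⟩ | ⟨βs, n, hd, hl, hg⟩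
    · right
      refine ⟨βs, k, by rw [hd]; rfl, by simp [hl], hg⟩
    · left
      refine ⟨_, by rw [hd]; rfl, ?_, goodr_gnext hg⟩
      rw [gnext_length]
      simp only [List.length_append, List.length_cons, List.length_nil]
      omega

noncomputable def rawInf : Raw (ℕ → SorgLine) where
  L u := gleaf (gdec u)
  opn u := by
    show IsOpen (gleaf (gdec u))
    cases h : gdec u with
    | rect βs => exact grleaf_open βs
    | piece βs n => exact isOpen_iUnion (fun l => grleaf_open _)
  uni u := by
    show gleaf (gdec u) = ⋃ k, gleaf (gdec (u ++ [k]))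
    have hstep : ∀ k, gdec (u ++ [k]) = gstep (gdec u) k := fun k => gdec_append u k
    cases h : gdec u with
    | rect βs =>
      ext y
      simp only [Set.mem_iUnion]
      constructor
      · intro hy
        have hch : ∀ i : Fin (βs.length + 2), ∃ k,
            y (i : ℕ) ∈ sleaf (sdec (βs.getD (i:ℕ) [] ++ [k])) := by
          intro i
          have h2 : y (i:ℕ) ∈ rawS.L (βs.getD (i:ℕ) []) := hy (i:ℕ)
          rw [rawS.uni (βs.getD (i:ℕ) [])] at h2
          exact Set.mem_iUnion.mp h2
        choose kk hkk using hch
        set l : List ℕ := List.ofFn kk with hldef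
        have hlen : l.length = βs.length + 2 := by simp [hldef]
        have hlne : l ≠ [] := by
          intro hc
          rw [hc] at hlen
          simp at hlen
        obtain ⟨n, hmin, hmem⟩ := exists_list_min l hlne
        have hVP : VP βs.length n l := ⟨hlen, hmin, hmem⟩
        refine ⟨n, ?_⟩
        rw [hstep, h]
        show y ∈ gleaf (.piece βs n)
        refine Set.mem_iUnion.mpr ⟨⟨l, hVP⟩, ?_⟩
        intro i
        rcases Nat.lt_or_ge i (βs.length + 2) with hi | hi
        · rw [gnext_getD_lt βs l hi]
          have he : l.getD i 0 = kk ⟨i, hi⟩ := by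
            have hl2 : i < (List.ofFn kk).length := by simp; omega
            show (List.ofFn kk).getD i 0 = _
            rw [List.getD_eq_getElem _ _ hl2, List.getElem_ofFn]
          rw [he]
          exact hkk ⟨i, hi⟩
        · rw [gnext_getD_ge βs l hi]
          trivial
      · rintro ⟨k, hk⟩
        rw [hstep, h] at hk
        exact gleaf_step_subset (.rect βs) k hk
    | piece βs n =>
      ext y
      simp only [Set.mem_iUnion]
      constructor
      · intro hy
        obtain ⟨l, hl⟩ := Set.mem_iUnion.mp hy
        refine ⟨(vEquiv βs.length n).symm l, ?_⟩
        rw [hstep, h]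
        show y ∈ gleaf (gstep (.piece βs n) _)
        simp only [gstep, Equiv.apply_symm_apply]
        exact hl
      · rintro ⟨c, hc⟩
        rw [hstep, h] at hc
        exact gleaf_step_subset (.piece βs n) c hc
  dis u j k hjk := by
    show Disjoint (gleaf (gdec (u ++ [j]))) (gleaf (gdec (u ++ [k])))
    rw [gdec_append, gdec_append]
    rw [Set.disjoint_left]
    cases h : gdec u with
    | rect βs =>
      intro y hyj hyk
      simp only [gstep, gleaf] at hyj hyk
      obtain ⟨l, hl⟩ := Set.mem_iUnion.mp hyj
      obtain ⟨l', hl'⟩ := Set.mem_iUnion.mp hyk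
      have hll : l.val = l'.val := by
        apply List.ext_getElem (by rw [l.prop.1, l'.prop.1])
        intro i hi1 hi2
        have hi : i < βs.length + 2 := by
          have := l.prop.1
          omega
        have h1 := hl i
        have h2 := hl' i
        rw [gnext_getD_lt βs _ hi] at h1 h2
        have he : l.val.getD i 0 = l'.val.getD i 0 := by
          by_contra hne
          have hd1 : Disjoint (rawS.L (βs.getD i [] ++ [l.val.getD i 0]))
              (rawS.L (βs.getD i [] ++ [l'.val.getD i 0])) := rawS.dis _ hne
          exact Set.not_disjoint_iff.mpr ⟨y i, h1, h2⟩ hd1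
        rw [List.getD_eq_getElem _ _ hi1, List.getD_eq_getElem _ _ hi2] at he
        exact he
      exact hjk (vp_unique (hll ▸ l.prop) l'.prop)
    | piece βs n =>
      intro y hyj hyk
      simp only [gstep, gleaf] at hyj hyk
      set l := ((vEquiv βs.length n) j).val with hldef
      set l' := ((vEquiv βs.length n) k).val with hldef'
      have hll : l = l' := by
        apply List.ext_getElem
          (by rw [((vEquiv βs.length n) j).prop.1, ((vEquiv βs.length n) k).prop.1])
        intro i hi1 hi2
        have hi : i < βs.length + 2 := by
          have := ((vEquiv βs.length n) j).prop.1
          have h9 : l.length = βs.length + 2 := this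
          omega
        have h1 := hyj i
        have h2 := hyk i
        rw [gnext_getD_lt βs _ hi] at h1 h2
        have he : l.getD i 0 = l'.getD i 0 := by
          by_contra hne
          have hd1 : Disjoint (rawS.L (βs.getD i [] ++ [l.getD i 0]))
              (rawS.L (βs.getD i [] ++ [l'.getD i 0])) := rawS.dis _ hne
          exact Set.not_disjoint_iff.mpr ⟨y i, h1, h2⟩ hd1
        rw [List.getD_eq_getElem _ _ hi1, List.getD_eq_getElem _ _ hi2] at he
        exact he
      exact hjk ((vEquiv βs.length n).injective (Subtype.ext hll))
  rt := by
    show grleaf [] = univ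
    ext y
    constructor
    · intro _
      trivial
    · intro _ i
      show y i ∈ sleaf (sdec [])
      rw [sdec_nil]
      trivial
  int x := by
    show ∃ z, ⋂ n, gleaf (gdec (pre x n)) = {z}
    set Bs : ℕ → List (List ℕ) := fun m => Nat.rec []
      (fun m prev => gnext prev ((vEquiv prev.length (x (2*m))) (x (2*m+1))).val) m with hBs
    have hBsS : ∀ m, Bs (m+1)
        = gnext (Bs m) ((vEquiv (Bs m).length (x (2*m))) (x (2*m+1))).val := fun m => rfl
    set lm : ℕ → List ℕ := fun m => ((vEquiv (Bs m).length (x (2*m))) (x (2*m+1))).val with hlm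
    have hBlen : ∀ m, (Bs m).length = 2*m := by
      intro m
      induction m with
      | zero => rfl
      | succ m ih =>
        rw [hBsS, gnext_length, ih]
        omega
    have heven : ∀ m, gdec (pre x (2*m)) = .rect (Bs m) := by
      intro m
      induction m with
      | zero => rfl
      | succ m ih =>
        have h1 : 2*(m+1) = (2*m+1)+1 := by omega
        rw [h1, pre_succ, pre_succ, gdec_append, gdec_append, ih]
        rfl
    set xc : ℕ → ℕ → ℕ := fun i j => (lm (i/2 + j)).getD i 0 with hxc
    have hcoord : ∀ m i, i < 2*m → (Bs m).getD i [] = pre (xc i) (m - i/2) := by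
      intro m
      induction m with
      | zero => intro i hi; omega
      | succ m ih =>
        intro i hi
        rw [hBsS]
        have hi2 : i < (Bs m).length + 2 := by rw [hBlen]; omega
        rw [gnext_getD_lt _ _ hi2]
        rcases Nat.lt_or_ge i (2*m) with h2 | h2
        · rw [ih i h2]
          have e1 : m + 1 - i/2 = (m - i/2) + 1 := by omega
          rw [e1, pre_succ]
          have e2 : xc i (m - i/2) = (lm m).getD i 0 := by
            simp only [hxc]
            have e3 : i/2 + (m - i/2) = m := by omega
            rw [e3]
          rw [e2]
        · have e0 : (Bs m).getD i [] = [] := List.getD_eq_default _ _ (by rw [hBlen]; omega)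
          rw [e0]
          have e2 : m + 1 - i/2 = 1 := by omega
          rw [e2]
          have e3 : pre (xc i) 1 = [xc i 0] := by simp [pre, List.range_succ]
          rw [e3]
          have e4 : xc i 0 = (lm m).getD i 0 := by
            simp only [hxc]
            have e5 : i/2 + 0 = m := by omega
            rw [e5]
          rw [e4]
          rfl
    have hanti : ∀ n, gleaf (gdec (pre x (n+1))) ⊆ gleaf (gdec (pre x n)) := by
      intro n
      rw [pre_succ, gdec_append]
      exact gleaf_step_subset _ _
    have hqc : ∀ i : ℕ, ∃ z : ℝ, ⋂ n, sleaf (sdec (pre (xc i) n)) = {z} :=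
      fun i => rawS.int (xc i)
    choose qc hqc using hqc
    refine ⟨(fun i => qc i), ?_⟩
    rw [← subseq_iInter (fun n => gleaf (gdec (pre x n))) hanti (fun m => 2*m)
      (fun m => by change m ≤ 2*m; omega)]
    ext y
    simp only [Set.mem_iInter, Set.mem_singleton_iff]
    constructor
    · intro hy
      funext i
      have hyi : ∀ n, y i ∈ sleaf (sdec (pre (xc i) n)) := by
        intro n
        have hm := hy (n + i/2 + 1)
        rw [heven] at hm
        have h3 := hm i
        have hi2 : i < 2*(n + i/2 + 1) := by omega
        rw [hcoord _ i hi2] at h3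
        have e1 : n + i/2 + 1 - i/2 = n + 1 := by omega
        rw [e1] at h3
        have h4 : sleaf (sdec (pre (xc i) (n+1))) ⊆ sleaf (sdec (pre (xc i) n)) := by
          rw [pre_succ]
          exact rawS.step_subset _ _
        exact h4 h3
      have h5 : y i ∈ ⋂ n, sleaf (sdec (pre (xc i) n)) := Set.mem_iInter.mpr hyi
      rw [hqc i] at h5
      exact h5
    · rintro rfl
      intro m
      rw [heven]
      intro i
      rcases Nat.lt_or_ge i (2*m) with hi | hi
      · rw [hcoord m i hi]
        have h5 : qc i ∈ ⋂ n, sleaf (sdec (pre (xc i) n)) := by rw [hqc i]; rfl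
        exact Set.mem_iInter.mp h5 _
      · rw [List.getD_eq_default _ _ (by rw [hBlen]; omega)]
        trivial

lemma rawInf_dia2 : rawInf.Dia2 := by
  intro q0 W hW
  set qr : ℕ → ℝ := fun i => q0 i with hqr
  rw [nhds_pi] at hW
  obtain ⟨I, hIfin, t, ht, hsub⟩ := Filter.mem_pi.mp hW
  have hdd : ∀ i : ℕ, ∃ dd : ℝ, ∃ L0 : ℕ, i ∈ I →
      (qr i < dd ∧ Set.Ico (qr i) dd ⊆ t i ∧
        ∀ u : List ℕ, qr i ∈ sleaf (sdec u) → L0 ≤ u.length →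
          ∃ N, ∀ k, N ≤ k → sleaf (sdec (u ++ [k])) ⊆ Set.Ico (qr i) dd) := by
    intro i
    by_cases hi : i ∈ I
    · obtain ⟨d, hd1, hd2⟩ := sorg_nhds (ht i)
      obtain ⟨L0, hL0⟩ := sorg_tail hd1
      exact ⟨d, L0, fun _ => ⟨hd1, hd2, hL0⟩⟩
    · exact ⟨0, 0, fun h => absurd h hi⟩
  choose dd L0 hdL using hdd
  obtain ⟨Mx, hMx⟩ := hIfin.bddAbove
  set ML : ℕ := hIfin.toFinset.sup (fun i => L0 i + i) with hML
  refine ⟨2 * (ML + Mx + 1), fun b hqb hblen hbev => ?_⟩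
  rcases gdec_struct b with ⟨βs, hd, hl, hg⟩ | ⟨βs, n, hd, hl, hg⟩
  swap
  · exfalso
    obtain ⟨m1, hm1⟩ := hbev
    obtain ⟨m2, hm2⟩ := hg.1
    omega
  · have hqb' : q0 ∈ gleaf (gdec b) := hqb
    rw [hd] at hqb'
    have hqb'' : q0 ∈ grleaf βs := hqb'
    have hNc : ∀ i : ℕ, ∃ N : ℕ, i ∈ I →
        ∀ k, N ≤ k → sleaf (sdec (βs.getD i [] ++ [k])) ⊆ Set.Ico (qr i) (dd i) := by
      intro i
      by_cases hi : i ∈ I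
      · obtain ⟨h1, h2, h3⟩ := hdL i hi
        have hqi : qr i ∈ sleaf (sdec (βs.getD i [])) := hqb'' i
        have hiMx : i ≤ Mx := hMx hi
        have hiML : L0 i + i ≤ ML := Finset.le_sup (f := fun i => L0 i + i)
          (hIfin.mem_toFinset.mpr hi)
        have hilt : i < βs.length := by omega
        have hilen : L0 i ≤ (βs.getD i []).length := by
          rw [hg.2 i hilt]
          obtain ⟨m2, hm2⟩ := hg.1
          omega
        obtain ⟨N, hN⟩ := h3 _ hqi hilen
        exact ⟨N, fun _ => hN⟩
      · exact ⟨0, fun h => absurd h hi⟩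
    choose Nc hNc using hNc
    set N := hIfin.toFinset.sup Nc with hNdef
    refine ⟨N, fun k k' hk hk' => ?_⟩
    show gleaf (gdec (b ++ [k] ++ [k'])) ⊆ W
    rw [gdec_append, gdec_append, hd]
    show grleaf (gnext βs ((vEquiv βs.length k) k').val) ⊆ W
    intro y hy
    apply hsub
    rw [Set.mem_pi]
    intro i hi
    have hyi := hy i
    have hiMx : i ≤ Mx := hMx hi
    have hilt2 : i < βs.length + 2 := by omega
    rw [gnext_getD_lt _ _ hilt2] at hyi
    have hge : k ≤ ((vEquiv βs.length k) k').val.getD i 0 :=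
      vp_getD_ge ((vEquiv βs.length k) k').prop i hilt2
    have hNi : Nc i ≤ N := Finset.le_sup (hIfin.mem_toFinset.mpr hi)
    have h9 : y i ∈ Set.Ico (qr i) (dd i) :=
      hNc i hi _ (le_trans (le_trans hNi hk) hge) hyi
    exact (hdL i hi).2.1 h9

end PiWork
/-- Corollary `cor.pi.tree.for.X*N.X*Sor.l` of the paper. -/
theorem products_with_baire_and_sorgenfrey_have_piTree
    {X : Type u} [TopologicalSpace X] (hX : ∃ F : FoliageTree X, F.IsPiTree) :
    (∃ F : FoliageTree (X × (ℕ → ℕ)), F.IsPiTree) ∧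
      (∃ F : FoliageTree (X × SorgLine), F.IsPiTree) ∧
      ∃ F : FoliageTree (X × (ℕ → SorgLine)), F.IsPiTree := by
  obtain ⟨RF, hRF⟩ := PiWork.exists_raw hX
  refine ⟨?_, ?_, ?_⟩
  · exact ⟨(PiWork.master RF PiWork.rawN).toTree,
      (PiWork.master RF PiWork.rawN).isPiTree
        (PiWork.master_grows RF PiWork.rawN hRF PiWork.rawN_dia2)⟩
  · exact ⟨(PiWork.master RF PiWork.rawS).toTree,
      (PiWork.master RF PiWork.rawS).isPiTree
        (PiWork.master_grows RF PiWork.rawS hRF PiWork.rawS_dia2)⟩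
  · exact ⟨(PiWork.master RF PiWork.rawInf).toTree,
      (PiWork.master RF PiWork.rawInf).isPiTree
        (PiWork.master_grows RF PiWork.rawInf hRF PiWork.rawInf_dia2)⟩
end

section
/- A foliage tree F is a locally strict foliage ω,ω-tree with strict branches if and only if F is isomorphic to the standard foliage tree S of ω^ω. -/
open Set

universe u v

/-- The cylinder of all infinite extensions of a finite sequence. -/
def cyl (x : List ℕ) : Set (ℕ → ℕ) := {p | ∀ j : Fin x.length, p j = x.get j}

lemma seqLT_trans' {a b c : List ℕ} (h1 : seqLT a b) (h2 : seqLT b c) : seqLT a c := by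
  refine ⟨h1.1.trans h2.1, ?_⟩
  rintro rfl
  exact h1.2 (h1.1.eq_of_length (le_antisymm h1.1.length_le h2.1.length_le))

lemma seqLT_length_lt {a b : List ℕ} (h : seqLT a b) : a.length < b.length :=
  lt_of_le_of_ne h.1.length_le fun he => h.2 (h.1.eq_of_length he)

lemma seqLT_isWellOrder (a : List ℕ) :
    IsWellOrder {b : List ℕ // seqLT b a} (fun x y => seqLT x.1 y.1) where
  trichotomous := by
    rintro ⟨x, hx⟩ ⟨y, hy⟩ h1 h2
    rcases List.prefix_or_prefix_of_prefix hx.1 hy.1 with h | h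
    · by_cases he : x = y
      · exact Subtype.ext he
      · exact absurd ⟨h, he⟩ h1
    · by_cases he : x = y
      · exact Subtype.ext he
      · exact absurd ⟨h, fun hh => he hh.symm⟩ h2
  wf := by
    have h : WellFounded (InvImage Nat.lt (fun x : {b : List ℕ // seqLT b a} => x.1.length)) :=
      InvImage.wf _ Nat.lt_wfRel.wf
    exact Subrelation.wf (fun {x y} hxy => seqLT_length_lt hxy) h

/-- The standard foliage tree of `ω^ω`: skeleton `(ω^{<ω}, ⊂)`, leaves the
cylinders. -/
def stdTree : FoliageTree (ℕ → ℕ) where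
  Node := List ℕ
  lt := seqLT
  lt_irrefl := fun _ h => h.2 rfl
  lt_trans := fun h1 h2 => seqLT_trans' h1 h2
  wellOrdered := seqLT_isWellOrder
  leaf := cyl

/-- Isomorphism of foliage trees: an order isomorphism `φ` of skeletons
together with a bijection `ψ` of fleshes carrying each leaf `F_x` onto
`G_{φ x}`. -/
def FoliageTree.Isomorphic {X : Type u} {Y : Type v}
    (F : FoliageTree X) (G : FoliageTree Y) : Prop :=
  ∃ (φ : F.lt ≃r G.lt) (ψ : ↥F.flesh ≃ ↥G.flesh),
    ∀ (x : F.Node) (p : ↥F.flesh), (p : X) ∈ F.leaf x ↔ (ψ p : Y) ∈ G.leaf (φ x)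

namespace FoliageHelpers

open FoliageTree

attribute [reducible] stdTree

/-- The length-`k` prefix of `f : ℕ → ℕ` as a list. -/
def pre (f : ℕ → ℕ) (k : ℕ) : List ℕ := List.ofFn fun i : Fin k => f i

@[simp] lemma length_pre (f : ℕ → ℕ) (k : ℕ) : (pre f k).length = k := List.length_ofFn

@[simp] lemma getElem_pre (f : ℕ → ℕ) {k i : ℕ} (h : i < (pre f k).length) :
    (pre f k)[i] = f i := by
  simp [pre, List.getElem_ofFn]

lemma mem_cyl {p : ℕ → ℕ} {x : List ℕ} : p ∈ cyl x ↔ ∀ i (h : i < x.length), p i = x[i] := by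
  constructor
  · intro hp i h; exact hp ⟨i, h⟩
  · intro h j; exact h j j.isLt

lemma mem_cyl_iff {p : ℕ → ℕ} {x : List ℕ} : p ∈ cyl x ↔ pre p x.length = x := by
  rw [mem_cyl]
  constructor
  · intro h
    refine List.ext_getElem (by simp) fun i h1 h2 => ?_
    rw [getElem_pre, h i h2]
  · intro h i hi
    have h2 : i < (pre p x.length).length := by simp [hi]
    rw [← List.getElem_of_eq h h2, getElem_pre]

lemma self_mem_cyl_pre (f : ℕ → ℕ) (k : ℕ) : f ∈ cyl (pre f k) := by
  rw [mem_cyl]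
  intro i hi
  rw [getElem_pre]

lemma cyl_mono {x y : List ℕ} (h : x <+: y) : cyl y ⊆ cyl x := by
  intro p hp
  rw [mem_cyl] at *
  intro i hi
  exact (hp i (hi.trans_le h.length_le)).trans (h.getElem hi).symm

lemma pre_prefix (f : ℕ → ℕ) {k m : ℕ} (h : k ≤ m) : pre f k <+: pre f m := by
  rw [List.prefix_iff_eq_take]
  refine List.ext_getElem (by simp [h]) fun i h1 h2 => ?_
  rw [getElem_pre, List.getElem_take, getElem_pre]

lemma seqLT_of_prefix {a b : List ℕ} (h : a <+: b) (hl : a.length < b.length) : seqLT a b :=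
  ⟨h, fun he => by subst he; exact lt_irrefl _ hl⟩

lemma chain_prefix {C : Set (List ℕ)} (hC : stdTree.IsChainN C) {x y : List ℕ}
    (hx : x ∈ C) (hy : y ∈ C) : x <+: y ∨ y <+: x := by
  rcases hC x hx y hy with h | h | h
  · exact Or.inl h.1
  · exact Or.inl (h ▸ List.prefix_refl x)
  · exact Or.inr h.1

lemma chain_prefix_of_le {C : Set (List ℕ)} (hC : stdTree.IsChainN C) {x y : List ℕ}
    (hx : x ∈ C) (hy : y ∈ C) (hl : x.length ≤ y.length) : x <+: y := by
  rcases chain_prefix hC hx hy with h | h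
  · exact h
  · exact (h.eq_of_length (le_antisymm h.length_le hl)).symm ▸ List.prefix_refl _

lemma chain_eq_of_length {C : Set (List ℕ)} (hC : stdTree.IsChainN C) {x y : List ℕ}
    (hx : x ∈ C) (hy : y ∈ C) (hl : x.length = y.length) : x = y :=
  (chain_prefix_of_le hC hx hy hl.le).eq_of_length hl

lemma mem_sons_std {a b : List ℕ} : b ∈ stdTree.Sons a ↔ ∃ n, b = a ++ [n] := by
  constructor
  · rintro ⟨h1, h2⟩
    have hab : a.length < b.length := seqLT_length_lt h1
    have hlen : b.length = a.length + 1 := by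
      by_contra hne
      have hlt : a.length + 1 < b.length := lt_of_le_of_ne hab (fun h => hne h.symm)
      refine h2 ⟨b.take (a.length + 1), ?_, ?_⟩
      · refine seqLT_of_prefix ?_ (by rw [List.length_take]; omega)
        have := List.prefix_iff_eq_take.1 h1.1
        rw [List.prefix_iff_eq_take, List.take_take]
        simpa [Nat.min_eq_left (Nat.le_succ _)] using this
      · exact seqLT_of_prefix (List.take_prefix _ _) (by rw [List.length_take]; omega)
    refine ⟨b[a.length]'(by omega), ?_⟩
    have h3 : b.drop a.length = [b[a.length]'(by omega)] := by
      rw [List.drop_eq_getElem_cons (by omega)]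
      have : b.drop (a.length + 1) = [] := by simp [hlen]
      rw [this]
    conv_lhs => rw [← List.take_append_drop a.length b]
    rw [h3, ← List.prefix_iff_eq_take.1 h1.1]
  · rintro ⟨n, rfl⟩
    refine ⟨seqLT_of_prefix (List.prefix_append _ _) (by simp), ?_⟩
    rintro ⟨t, ht1, ht2⟩
    have := seqLT_length_lt ht1
    have := seqLT_length_lt ht2
    simp at this; omega

lemma cyl_eq_iUnion (a : List ℕ) : cyl a = ⋃ n, cyl (a ++ [n]) := by
  ext p
  simp only [Set.mem_iUnion]
  constructor
  · intro hp
    refine ⟨p a.length, ?_⟩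
    rw [mem_cyl] at hp ⊢
    intro i hi
    simp only [List.length_append, List.length_cons, List.length_nil] at hi
    rcases lt_or_eq_of_le (Nat.lt_succ_iff.1 hi) with h | h
    · rw [List.getElem_append_left h]
      exact hp i h
    · subst h
      rw [List.getElem_concat_length rfl]
  · rintro ⟨n, hn⟩
    exact cyl_mono (List.prefix_append _ _) hn

lemma cyl_append_disjoint {a : List ℕ} {m n : ℕ} (h : m ≠ n) :
    Disjoint (cyl (a ++ [m])) (cyl (a ++ [n])) := by
  rw [Set.disjoint_left]
  intro p hp hq
  rw [mem_cyl] at hp hq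
  have h1 := hp a.length (by simp)
  have h2 := hq a.length (by simp)
  rw [List.getElem_concat_length rfl] at h1 h2
  exact h (h1 ▸ h2)

lemma std_not_max (a : List ℕ) : ¬ stdTree.IsMaxNode a := by
  intro h
  have hl : (a ++ [0]).length = a.length + 1 := by simp
  exact h ⟨a ++ [0], seqLT_of_prefix (List.prefix_append _ _) (by omega)⟩

lemma flesh_std : stdTree.flesh = Set.univ := by
  ext p
  simp only [Set.mem_univ, iff_true]
  exact Set.mem_iUnion.2 ⟨[], mem_cyl.2 (by intro i hi; simp at hi)⟩

section Transfer

variable {X : Type u} {Y : Type v} {F : FoliageTree X} {G : FoliageTree Y}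

lemma sons_transfer (e : F.lt ≃r G.lt) {x s : F.Node} :
    s ∈ F.Sons x ↔ e s ∈ G.Sons (e x) := by
  unfold FoliageTree.Sons
  simp only [Set.mem_setOf_eq, e.map_rel_iff]
  constructor
  · rintro ⟨h1, h2⟩
    refine ⟨h1, ?_⟩
    rintro ⟨t, ht1, ht2⟩
    rw [← e.apply_symm_apply t] at ht1 ht2
    exact h2 ⟨e.symm t, e.map_rel_iff.1 ht1, e.map_rel_iff.1 ht2⟩
  · rintro ⟨h1, h2⟩
    refine ⟨h1, ?_⟩
    rintro ⟨t, ht1, ht2⟩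
    exact h2 ⟨e t, e.map_rel_iff.2 ht1, e.map_rel_iff.2 ht2⟩

lemma maxNode_transfer (e : F.lt ≃r G.lt) {x : F.Node} :
    F.IsMaxNode x ↔ G.IsMaxNode (e x) := by
  unfold FoliageTree.IsMaxNode
  constructor
  · rintro h ⟨s, hs⟩
    rw [← e.apply_symm_apply s] at hs
    exact h ⟨e.symm s, e.map_rel_iff.1 hs⟩
  · rintro h ⟨s, hs⟩
    exact h ⟨e s, e.map_rel_iff.2 hs⟩

lemma chain_transfer (e : F.lt ≃r G.lt) {C : Set F.Node} (h : F.IsChainN C) :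
    G.IsChainN (⇑e '' C) := by
  rintro _ ⟨x, hx, rfl⟩ _ ⟨y, hy, rfl⟩
  rcases h x hx y hy with h' | h' | h'
  · exact Or.inl (e.map_rel_iff.2 h')
  · exact Or.inr (Or.inl (congrArg e h'))
  · exact Or.inr (Or.inr (e.map_rel_iff.2 h'))

lemma branch_transfer (e : F.lt ≃r G.lt) {B : Set F.Node} (h : F.IsBranch B) :
    G.IsBranch (⇑e '' B) := by
  refine ⟨chain_transfer e h.1, fun C hC hBC => ?_⟩
  have h1 : F.IsChainN (⇑e.symm '' C) := chain_transfer e.symm hC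
  have h2 : B ⊆ ⇑e.symm '' C := fun x hx =>
    ⟨e x, hBC ⟨x, hx, rfl⟩, e.symm_apply_apply x⟩
  have h3 := h.2 _ h1 h2
  ext y
  constructor
  · rintro ⟨x, hx, rfl⟩
    rw [h3] at hx
    obtain ⟨z, hz, rfl⟩ := hx
    rwa [e.apply_symm_apply]
  · intro hy
    exact ⟨e.symm y, h3 ▸ ⟨y, hy, rfl⟩, e.apply_symm_apply y⟩

lemma branch_nonempty {B : Set F.Node} (h : F.IsBranch B) (y : F.Node) : B.Nonempty := by
  by_contra hne
  rw [Set.not_nonempty_iff_eq_empty] at hne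
  have hchain : F.IsChainN {y} := by
    intro a ha b hb
    rw [Set.mem_singleton_iff] at ha hb
    exact Or.inr (Or.inl (ha.trans hb.symm))
  have := h.2 {y} hchain (hne ▸ Set.empty_subset _)
  rw [hne] at this
  exact (Set.singleton_ne_empty y) this.symm

end Transfer

lemma prefix_to_rel {a b : List ℕ} (h : a <+: b ∨ b <+: a) :
    seqLT a b ∨ a = b ∨ seqLT b a := by
  rcases h with h | h
  · rcases eq_or_ne a b with he | he
    · exact Or.inr (Or.inl he)
    · exact Or.inl ⟨h, he⟩
  · rcases eq_or_ne a b with he | he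
    · exact Or.inr (Or.inl he)
    · exact Or.inr (Or.inr ⟨h, fun hh => he hh.symm⟩)

lemma branch_take_mem {B : Set (List ℕ)} (hB : stdTree.IsBranch B) {l : List ℕ}
    (hl : l ∈ B) (n : ℕ) : l.take n ∈ B := by
  have hcomp : ∀ z ∈ B, z <+: l.take n ∨ l.take n <+: z := by
    intro z hz
    rcases chain_prefix hB.1 hz hl with h | h
    · exact List.prefix_or_prefix_of_prefix h (List.take_prefix _ _)
    · exact Or.inr ((List.take_prefix _ _).trans h)
  have hchain : stdTree.IsChainN (insert (l.take n) B) := by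
    intro x hx y hy
    rcases Set.mem_insert_iff.1 hx with rfl | hx <;>
      rcases Set.mem_insert_iff.1 hy with rfl | hy
    · exact Or.inr (Or.inl rfl)
    · exact prefix_to_rel (Or.symm (hcomp y hy))
    · exact prefix_to_rel (hcomp x hx)
    · exact hB.1 x hx y hy
  have := hB.2 _ hchain (Set.subset_insert _ _)
  rw [this]
  exact Set.mem_insert _ _

lemma branch_exists_length {B : Set (List ℕ)} (hB : stdTree.IsBranch B) (n : ℕ) :
    ∃ l ∈ B, l.length = n := by
  suffices h : ∃ l ∈ B, n ≤ l.length by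
    obtain ⟨l, hl, hn⟩ := h
    exact ⟨l.take n, branch_take_mem hB hl n, by rw [List.length_take]; omega⟩
  by_contra h'
  push_neg at h'
  have hne : B.Nonempty := branch_nonempty hB ([] : List ℕ)
  have hinj : Set.InjOn List.length B := fun x hx y hy h => chain_eq_of_length hB.1 hx hy h
  have hfin : B.Finite := by
    refine Set.Finite.of_finite_image ?_ hinj
    exact (Set.finite_Iio n).subset (by rintro _ ⟨l, hl, rfl⟩; exact h' l hl)
  obtain ⟨m, hm, hmax0⟩ := Set.Finite.exists_maximalFor List.length B hfin hne
  have hmax : ∀ z ∈ B, m.length ≤ z.length → m.length = z.length :=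
    fun z hz h => le_antisymm h (hmax0 hz h)
  have hpref : ∀ z ∈ B, z <+: m := by
    intro z hz
    rcases chain_prefix hB.1 hz hm with h | h
    · exact h
    · have heq := hinj hm hz (hmax z hz h.length_le)
      rw [← heq]
  have hchain : stdTree.IsChainN (insert (m ++ [0]) B) := by
    intro x hx y hy
    rcases Set.mem_insert_iff.1 hx with rfl | hx <;>
      rcases Set.mem_insert_iff.1 hy with rfl | hy
    · exact Or.inr (Or.inl rfl)
    · exact prefix_to_rel (Or.inr ((hpref y hy).trans (List.prefix_append _ _)))
    · exact prefix_to_rel (Or.inl ((hpref x hx).trans (List.prefix_append _ _)))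
    · exact hB.1 x hx y hy
  have heq := hB.2 _ hchain (Set.subset_insert _ _)
  have hmem : m ++ [0] ∈ B := heq ▸ Set.mem_insert _ _
  have := (hpref _ hmem).length_le
  simp at this

lemma branch_eq_range_pre {B : Set (List ℕ)} (hB : stdTree.IsBranch B) :
    ∃ f : ℕ → ℕ, B = Set.range (pre f) := by
  choose ℓ hmem hlen using branch_exists_length hB
  have hj1 : ∀ j : ℕ, j < (ℓ (j + 1)).length := fun j => by rw [hlen]; omega
  refine ⟨fun j => (ℓ (j + 1))[j]'(hj1 j), ?_⟩
  have key : ∀ n, ℓ n = pre (fun j => (ℓ (j + 1))[j]'(hj1 j)) n := by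
    intro n
    refine List.ext_getElem (by simp [hlen]) fun j h1 h2 => ?_
    rw [getElem_pre]
    rw [hlen n] at h1
    have hpre : ℓ (j + 1) <+: ℓ n :=
      chain_prefix_of_le hB.1 (hmem _) (hmem _) (by rw [hlen, hlen]; omega)
    exact (hpre.getElem _).symm
  ext l
  constructor
  · intro hl
    have : l = ℓ l.length :=
      chain_eq_of_length hB.1 hl (hmem _) (by rw [hlen])
    rw [this, key]
    exact Set.mem_range_self _
  · rintro ⟨k, rfl⟩
    rw [← key]
    exact hmem k

lemma range_pre_isBranch (f : ℕ → ℕ) : stdTree.IsBranch (Set.range (pre f)) := by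
  constructor
  · rintro _ ⟨a, rfl⟩ _ ⟨b, rfl⟩
    rcases le_total a b with h | h
    · exact prefix_to_rel (Or.inl (pre_prefix f h))
    · exact prefix_to_rel (Or.inr (pre_prefix f h))
  · intro C hC hRC
    refine Set.Subset.antisymm hRC fun z hz => ?_
    have hmem : pre f z.length ∈ C := hRC (Set.mem_range_self _)
    rcases hC z hz _ hmem with h | h | h
    · have := seqLT_length_lt h; simp at this
    · exact h ▸ Set.mem_range_self _
    · have := seqLT_length_lt h; simp at this

lemma inter_cyl_range_pre (f : ℕ → ℕ) : ⋂ l ∈ Set.range (pre f), cyl l = {f} := by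
  ext g
  constructor
  · intro hg
    have h : ∀ k, g ∈ cyl (pre f k) := fun k => Set.mem_iInter₂.1 hg _ ⟨k, rfl⟩
    have : g = f := by
      funext j
      have := mem_cyl.1 (h (j + 1)) j (by simp)
      rwa [getElem_pre] at this
    exact this ▸ rfl
  · intro hg
    rw [Set.mem_singleton_iff] at hg
    subst hg
    exact Set.mem_iInter₂.2 (by rintro l ⟨k, rfl⟩; exact self_mem_cyl_pre g k)

section ForwardLemmas

variable {X : Type u} {F : FoliageTree X} (φ : F.lt ≃r stdTree.lt)

include φ

lemma F_not_max (x : F.Node) : ¬ F.IsMaxNode x := fun h =>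
  std_not_max (φ x) ((maxNode_transfer φ).1 h)

lemma parent_son {x : F.Node} (h : φ x ≠ []) :
    x ∈ F.Sons (φ.symm (φ x).dropLast) := by
  rw [sons_transfer φ, φ.apply_symm_apply, mem_sons_std]
  exact ⟨(φ x).getLast h, (List.dropLast_append_getLast h).symm⟩

lemma leaf_mono (hLS : F.LocallyStrict) :
    ∀ n : ℕ, ∀ x y : F.Node, (φ y).length = n → F.lt x y → F.leaf y ⊆ F.leaf x := by
  intro n
  induction n using Nat.strong_induction_on with
  | _ n IH =>
    intro x y hn hxy
    have hlt : seqLT (φ x) (φ y) := φ.map_rel_iff.2 hxy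
    have hll := seqLT_length_lt hlt
    have hne : φ y ≠ [] := by
      intro h0
      rw [h0] at hll
      simp at hll
    have hson : y ∈ F.Sons (φ.symm (φ y).dropLast) := parent_son φ hne
    have hvy : F.lt (φ.symm (φ y).dropLast) y := hson.1
    have hsub : F.leaf y ⊆ F.leaf (φ.symm (φ y).dropLast) := by
      have hnm : ¬ F.IsMaxNode (φ.symm (φ y).dropLast) := fun hm => hm ⟨y, hvy⟩
      rw [(hLS _ hnm).1]
      exact Set.subset_biUnion_of_mem hson
    rcases eq_or_ne (φ x) ((φ y).dropLast) with hxc | hxc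
    · have hx : x = φ.symm ((φ y).dropLast) := by rw [← hxc, φ.symm_apply_apply]
      exact hx ▸ hsub
    · have hdl : ((φ y).dropLast).length = (φ y).length - 1 := List.length_dropLast
      have hlen : (φ x).length ≤ ((φ y).dropLast).length := by omega
      have hpre : φ x <+: (φ y).dropLast := by
        have h1 := List.prefix_iff_eq_take.1 hlt.1
        rw [List.prefix_iff_eq_take, List.dropLast_eq_take, List.take_take,
          Nat.min_eq_left (by omega)]
        exact h1
      have hxv : F.lt x (φ.symm ((φ y).dropLast)) := by
        apply φ.map_rel_iff.1
        rw [φ.apply_symm_apply]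
        exact ⟨hpre, hxc⟩
      refine hsub.trans (IH ((φ y).dropLast).length (by omega) x _ ?_ hxv)
      rw [φ.apply_symm_apply]

lemma leaf_level_unique (hLS : F.LocallyStrict) :
    ∀ n : ℕ, ∀ x y : F.Node, (φ x).length = n → (φ y).length = n →
      ∀ p : X, p ∈ F.leaf x → p ∈ F.leaf y → x = y := by
  intro n
  induction n with
  | zero =>
    intro x y hx hy p _ _
    apply φ.injective
    rw [List.length_eq_zero_iff.1 hx, List.length_eq_zero_iff.1 hy]
  | succ n IH =>
    intro x y hx hy p hpx hpy
    have hxne : φ x ≠ [] := by intro h; rw [h] at hx; simp at hx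
    have hyne : φ y ≠ [] := by intro h; rw [h] at hy; simp at hy
    have hsx := parent_son φ hxne
    have hsy := parent_son φ hyne
    have hpx' : p ∈ F.leaf (φ.symm (φ x).dropLast) :=
      leaf_mono φ hLS (φ x).length _ x rfl hsx.1 hpx
    have hpy' : p ∈ F.leaf (φ.symm (φ y).dropLast) :=
      leaf_mono φ hLS (φ y).length _ y rfl hsy.1 hpy
    have hlenx : (φ (φ.symm (φ x).dropLast)).length = n := by
      rw [φ.apply_symm_apply, List.length_dropLast, hx]; omega
    have hleny : (φ (φ.symm (φ y).dropLast)).length = n := by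
      rw [φ.apply_symm_apply, List.length_dropLast, hy]; omega
    have hpar := IH _ _ hlenx hleny p hpx' hpy'
    have hsy' : y ∈ F.Sons (φ.symm (φ x).dropLast) := hpar ▸ hsy
    have hnm : ¬ F.IsMaxNode (φ.symm (φ x).dropLast) := fun hm => hm ⟨x, hsx.1⟩
    by_contra hne
    exact Set.disjoint_left.1 ((hLS _ hnm).2 x hsx y hsy' hne) hpx hpy

variable (hSB : F.StrictBranches)

noncomputable def theta (f : ℕ → ℕ) : X :=
  (hSB.2 _ (branch_transfer φ.symm (range_pre_isBranch f))).choose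

lemma theta_spec (f : ℕ → ℕ) :
    ⋂ x ∈ (⇑φ.symm '' Set.range (pre f)), F.leaf x = {theta φ hSB f} :=
  (hSB.2 _ (branch_transfer φ.symm (range_pre_isBranch f))).choose_spec

lemma theta_mem (f : ℕ → ℕ) (k : ℕ) : theta φ hSB f ∈ F.leaf (φ.symm (pre f k)) := by
  have h := theta_spec φ hSB f
  have hmem : theta φ hSB f ∈ ⋂ x ∈ (⇑φ.symm '' Set.range (pre f)), F.leaf x := by
    rw [h]; rfl
  exact Set.mem_iInter₂.1 hmem _ ⟨pre f k, Set.mem_range_self k, rfl⟩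

lemma theta_leaf_iff (hLS : F.LocallyStrict) (f : ℕ → ℕ) (x : F.Node) :
    theta φ hSB f ∈ F.leaf x ↔ f ∈ cyl (φ x) := by
  constructor
  · intro h
    have h2 := theta_mem φ hSB f (φ x).length
    have hlen : (φ (φ.symm (pre f (φ x).length))).length = (φ x).length := by
      rw [φ.apply_symm_apply]; simp
    have hx := leaf_level_unique φ hLS (φ x).length x _ rfl hlen _ h h2
    rw [hx, φ.apply_symm_apply]
    exact self_mem_cyl_pre f _
  · intro h
    have hp := mem_cyl_iff.1 h
    have hx : x = φ.symm (pre f (φ x).length) := by rw [hp, φ.symm_apply_apply]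
    rw [hx]
    exact theta_mem φ hSB f _

lemma theta_mem_flesh (f : ℕ → ℕ) : theta φ hSB f ∈ F.flesh :=
  Set.mem_iUnion.2 ⟨_, theta_mem φ hSB f 0⟩

lemma theta_injective (hLS : F.LocallyStrict) : Function.Injective (theta φ hSB) := by
  intro f g h
  funext j
  have h1 := theta_mem φ hSB f (j + 1)
  rw [h] at h1
  have h2 := (theta_leaf_iff φ hSB hLS g _).1 h1
  rw [φ.apply_symm_apply] at h2
  have h3 := mem_cyl.1 h2 j (by simp)
  rw [getElem_pre] at h3
  exact h3.symm

lemma exists_step (hLS : F.LocallyStrict) {p : X} {l : List ℕ}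
    (h : p ∈ F.leaf (φ.symm l)) : ∃ n : ℕ, p ∈ F.leaf (φ.symm (l ++ [n])) := by
  have hnm := F_not_max φ (φ.symm l)
  rw [(hLS _ hnm).1] at h
  obtain ⟨s, hs, hps⟩ := Set.mem_iUnion₂.1 h
  have hs2 := (sons_transfer φ).1 hs
  rw [φ.apply_symm_apply] at hs2
  obtain ⟨n, hn⟩ := mem_sons_std.1 hs2
  refine ⟨n, ?_⟩
  have hseq : s = φ.symm (l ++ [n]) := by rw [← hn, φ.symm_apply_apply]
  exact hseq ▸ hps

lemma mem_leaf_root (hLS : F.LocallyStrict) {p : X} (hp : p ∈ F.flesh) :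
    p ∈ F.leaf (φ.symm []) := by
  obtain ⟨x, hx⟩ := Set.mem_iUnion.1 hp
  rcases eq_or_ne (φ x) [] with h | h
  · have hxr : x = φ.symm [] := by rw [← h, φ.symm_apply_apply]
    exact hxr ▸ hx
  · have hlt : F.lt (φ.symm []) x := by
      apply φ.map_rel_iff.1
      rw [φ.apply_symm_apply]
      exact ⟨List.nil_prefix, fun hh => h hh.symm⟩
    exact leaf_mono φ hLS _ _ x rfl hlt hx

noncomputable def gseq (hLS : F.LocallyStrict) (p : X) (hp : p ∈ F.flesh) :
    (k : ℕ) → {l : List ℕ // l.length = k ∧ p ∈ F.leaf (φ.symm l)}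
  | 0 => ⟨[], rfl, mem_leaf_root φ hLS hp⟩
  | k + 1 =>
    ⟨(gseq hLS p hp k).1 ++ [(exists_step φ hLS (gseq hLS p hp k).2.2).choose],
      by simp [(gseq hLS p hp k).2.1],
      (exists_step φ hLS (gseq hLS p hp k).2.2).choose_spec⟩

lemma gseq_prefix (hLS : F.LocallyStrict) (p : X) (hp : p ∈ F.flesh) {j k : ℕ}
    (h : j ≤ k) : (gseq φ hLS p hp j).1 <+: (gseq φ hLS p hp k).1 := by
  induction k with
  | zero =>
    have hj : j = 0 := by omega
    subst hj
    exact List.prefix_refl _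
  | succ k IH =>
    have hstep : (gseq φ hLS p hp k).1 <+: (gseq φ hLS p hp (k + 1)).1 := by
      show (gseq φ hLS p hp k).1 <+: (gseq φ hLS p hp k).1 ++ _
      exact List.prefix_append _ _
    rcases eq_or_lt_of_le h with rfl | hlt
    · exact List.prefix_refl _
    · exact (IH (by omega)).trans hstep

lemma theta_surjective (hLS : F.LocallyStrict) {p : X} (hp : p ∈ F.flesh) :
    ∃ f : ℕ → ℕ, theta φ hSB f = p := by
  have hb : ∀ k, ((gseq φ hLS p hp (k + 1)).1).length = k + 1 := fun k =>
    (gseq φ hLS p hp (k + 1)).2.1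
  refine ⟨fun k => ((gseq φ hLS p hp (k + 1)).1)[k]'(by rw [hb]; omega), ?_⟩
  set f : ℕ → ℕ := fun k => ((gseq φ hLS p hp (k + 1)).1)[k]'(by rw [hb]; omega) with hf
  have key : ∀ k, (gseq φ hLS p hp k).1 = pre f k := by
    intro k
    refine List.ext_getElem (by simp [(gseq φ hLS p hp k).2.1]) fun j h1 h2 => ?_
    rw [getElem_pre, hf]
    have hjk : j + 1 ≤ k := by
      have := (gseq φ hLS p hp k).2.1
      omega
    exact ((gseq_prefix φ hLS p hp hjk).getElem (by rw [hb]; omega)).symm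
  have hmem : p ∈ ⋂ x ∈ (⇑φ.symm '' Set.range (pre f)), F.leaf x := by
    refine Set.mem_iInter₂.2 ?_
    rintro _ ⟨_, ⟨k, rfl⟩, rfl⟩
    rw [← key]
    exact (gseq φ hLS p hp k).2.2
  rw [theta_spec φ hSB f] at hmem
  exact hmem.symm

end ForwardLemmas

end FoliageHelpers

/-- Lemma `lem.F.vs.S.by.isomorph` (a) of the paper: a foliage tree is a
locally strict foliage ω,ω-tree with strict branches iff it is isomorphic to
the standard foliage tree of `ω^ω`. -/
theorem locallyStrict_omegaOmega_strictBranches_iff_isomorphic_stdTree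
    {X : Type u} (F : FoliageTree X) :
    (F.LocallyStrict ∧ F.IsOmegaOmegaTree ∧ F.StrictBranches) ↔ F.Isomorphic stdTree := by
  open FoliageHelpers in
  constructor
  · rintro ⟨hLS, ⟨φ0⟩, hSB⟩
    have φ : F.lt ≃r stdTree.lt := φ0
    set Θ : (ℕ → ℕ) → ↥F.flesh :=
      fun f => ⟨theta φ hSB f, theta_mem_flesh φ hSB f⟩ with hΘ
    have hbij : Function.Bijective Θ := by
      constructor
      · intro f g h
        exact theta_injective φ hSB hLS (congrArg Subtype.val h)
      · intro q
        obtain ⟨f, hf⟩ := theta_surjective φ hSB hLS q.2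
        exact ⟨f, Subtype.ext hf⟩
    set E : (ℕ → ℕ) ≃ ↥F.flesh := Equiv.ofBijective Θ hbij with hE
    refine ⟨φ, E.symm.trans ((Equiv.Set.univ (ℕ → ℕ)).symm.trans
      (Equiv.setCongr flesh_std.symm)), ?_⟩
    intro x p
    have hcoe : ((E.symm.trans ((Equiv.Set.univ (ℕ → ℕ)).symm.trans
        (Equiv.setCongr flesh_std.symm))) p : ℕ → ℕ) = E.symm p := rfl
    have hp : (p : X) = theta φ hSB (E.symm p) :=
      (congrArg Subtype.val (E.apply_symm_apply p)).symm
    rw [hp, hcoe]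
    exact theta_leaf_iff φ hSB hLS (E.symm p) x
  · rintro ⟨φ, ψ, hψ⟩
    have hflesh : ∀ {q : X} {x : F.Node}, q ∈ F.leaf x → q ∈ F.flesh :=
      fun h => Set.mem_iUnion.2 ⟨_, h⟩
    refine ⟨?_, ⟨φ⟩, ?_⟩
    · -- LocallyStrict
      intro x _
      constructor
      · ext q
        constructor
        · intro hq
          have hqf : q ∈ F.flesh := hflesh hq
          have h1 : (ψ ⟨q, hqf⟩ : ℕ → ℕ) ∈ cyl (φ x) := (hψ x ⟨q, hqf⟩).1 hq
          rw [cyl_eq_iUnion] at h1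
          obtain ⟨n, hn⟩ := Set.mem_iUnion.1 h1
          refine Set.mem_iUnion₂.2 ⟨φ.symm ((show List ℕ from φ x) ++ [n]), ?_, ?_⟩
          · rw [sons_transfer φ, φ.apply_symm_apply, mem_sons_std]
            exact ⟨n, rfl⟩
          · refine (hψ _ ⟨q, hqf⟩).2 ?_
            rw [φ.apply_symm_apply]
            exact hn
        · intro hq
          obtain ⟨s, hs, hqs⟩ := Set.mem_iUnion₂.1 hq
          have hqf : q ∈ F.flesh := hflesh hqs
          have h1 := (hψ s ⟨q, hqf⟩).1 hqs
          obtain ⟨n, hn⟩ := mem_sons_std.1 ((sons_transfer φ).1 hs)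
          refine (hψ x ⟨q, hqf⟩).2 (cyl_mono ?_ h1)
          rw [hn]
          exact List.prefix_append _ _
      · intro s hs t ht hne
        rw [Set.disjoint_left]
        intro q hqs hqt
        have hqf : q ∈ F.flesh := hflesh hqs
        have h1 := (hψ s ⟨q, hqf⟩).1 hqs
        have h2 := (hψ t ⟨q, hqf⟩).1 hqt
        obtain ⟨m, hm⟩ := mem_sons_std.1 ((sons_transfer φ).1 hs)
        obtain ⟨n, hn⟩ := mem_sons_std.1 ((sons_transfer φ).1 ht)
        have hmn : m ≠ n := by
          intro h
          apply hne
          apply φ.injective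
          rw [hm, hn, h]
        rw [hm] at h1
        rw [hn] at h2
        exact Set.disjoint_left.1 (cyl_append_disjoint hmn) h1 h2
    · -- StrictBranches
      refine ⟨⟨φ.symm []⟩, ?_⟩
      intro B hB
      obtain ⟨f, hf⟩ := branch_eq_range_pre (branch_transfer φ hB)
      have hfmem : f ∈ stdTree.flesh := by rw [flesh_std]; trivial
      refine ⟨(ψ.symm ⟨f, hfmem⟩ : ↥F.flesh), ?_⟩
      have hIff : ∀ x ∈ B, ((ψ.symm ⟨f, hfmem⟩ : ↥F.flesh) : X) ∈ F.leaf x := by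
        intro x hx
        refine (hψ x _).2 ?_
        rw [ψ.apply_symm_apply]
        have hmem : φ x ∈ Set.range (pre f) := hf ▸ ⟨x, hx, rfl⟩
        obtain ⟨k, hk⟩ := hmem
        rw [← hk]
        exact self_mem_cyl_pre f k
      ext q
      simp only [Set.mem_iInter, Set.mem_singleton_iff]
      constructor
      · intro hq
        obtain ⟨x0, hx0⟩ := branch_nonempty hB (φ.symm [])
        have hqf : q ∈ F.flesh := hflesh (hq x0 hx0)
        have hcyl : (ψ ⟨q, hqf⟩ : ℕ → ℕ) ∈ ⋂ l ∈ Set.range (pre f), cyl l := by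
          refine Set.mem_iInter₂.2 ?_
          intro l hl
          rw [← hf] at hl
          obtain ⟨x, hx, rfl⟩ := hl
          exact (hψ x ⟨q, hqf⟩).1 (hq x hx)
        rw [inter_cyl_range_pre] at hcyl
        have hval : ψ ⟨q, hqf⟩ = (⟨f, hfmem⟩ : ↥stdTree.flesh) := Subtype.ext hcyl
        have heq : (⟨q, hqf⟩ : ↥F.flesh) = ψ.symm ⟨f, hfmem⟩ := by
          rw [← hval, ψ.symm_apply_apply]
        exact congrArg Subtype.val heq
      · rintro rfl
        exact hIff
end

section
/- If F is a π-tree on a topological space X and p ∈ X, then: (b1) the family {rise_F(p,U) : U a neighbourhood of p in X} has the finite intersection property; (b2) the intersection ⋂{rise_F(p,U) : U a neighbourhood of p in X} is empty; and (b3) for every neighbourhood U of p, rise_F(p,U) is an infinite subset of ω. -/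
open Set

universe u v

namespace PiAux

open List FoliageTree

variable {X : Type u} {F : FoliageTree X}

lemma seqLT_iff {a b : List ℕ} : seqLT a b ↔ a <+: b ∧ a.length < b.length := by
  constructor
  · rintro ⟨hp, hne⟩
    exact ⟨hp, lt_of_le_of_ne hp.length_le fun h => hne (hp.eq_of_length h)⟩
  · rintro ⟨hp, hlt⟩
    exact ⟨hp, fun h => by simp [h] at hlt⟩

lemma seqLT_of_proper {a b : List ℕ} (hp : a <+: b) (h : a.length < b.length) :
    seqLT a b := seqLT_iff.2 ⟨hp, h⟩

variable (e : F.lt ≃r seqLT)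
include e

lemma lt_iff' {v w : F.Node} : F.lt v w ↔ seqLT (e v) (e w) := e.map_rel_iff.symm

lemma sons_iff {v s : F.Node} : s ∈ F.Sons v ↔ ∃ i, e s = e v ++ [i] := by
  constructor
  · rintro ⟨h1, h2⟩
    obtain ⟨hp, hlt⟩ := seqLT_iff.1 ((lt_iff' e).1 h1)
    have hlen : (e s).length = (e v).length + 1 := by
      by_contra hne
      have hge : (e v).length + 1 < (e s).length := by omega
      apply h2
      refine ⟨e.symm ((e s).take ((e v).length + 1)), ?_, ?_⟩
      · rw [lt_iff' e, e.apply_symm_apply]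
        refine seqLT_of_proper ?_ ?_
        · exact prefix_of_prefix_length_le hp (take_prefix _ _)
            (by rw [length_take]; omega)
        · rw [length_take]; omega
      · rw [lt_iff' e, e.apply_symm_apply]
        refine seqLT_of_proper (take_prefix _ _) ?_
        rw [length_take]; omega
    have htake : (e s).take (e v).length = e v := (prefix_iff_eq_take.1 hp).symm
    have hdrop : ((e s).drop (e v).length).length = 1 := by
      rw [length_drop, hlen]; omega
    obtain ⟨i, hi⟩ := length_eq_one_iff.1 hdrop
    exact ⟨i, by rw [← take_append_drop (e v).length (e s), htake, hi]⟩
  · rintro ⟨i, hi⟩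
    constructor
    · rw [lt_iff' e, hi]
      exact seqLT_of_proper (prefix_append _ _) (by simp)
    · rintro ⟨t, h1, h2⟩
      obtain ⟨-, hl1⟩ := seqLT_iff.1 ((lt_iff' e).1 h1)
      obtain ⟨-, hl2⟩ := seqLT_iff.1 ((lt_iff' e).1 h2)
      rw [hi] at hl2; simp at hl2; omega

lemma not_isMax (v : F.Node) : ¬ F.IsMaxNode v := by
  intro h
  apply h
  refine ⟨e.symm (e v ++ [0]), ?_⟩
  rw [lt_iff' e, e.apply_symm_apply]
  exact seqLT_of_proper (prefix_append _ _) (by simp)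

lemma eq_of_apply_eq {v w : F.Node} (h : e v = e w) : v = w := e.injective h

/-- leaves of sons are contained in the leaf of the father. -/
lemma leaf_son_subset (hLS : F.LocallyStrict) {v s : F.Node} (hs : s ∈ F.Sons v) :
    F.leaf s ⊆ F.leaf v := by
  rw [(hLS v (not_isMax e v)).1]
  exact Set.subset_biUnion_of_mem hs

lemma leaf_mono_aux (hLS : F.LocallyStrict) :
    ∀ n : ℕ, ∀ v w : F.Node, (e w).length = n → e v <+: e w → F.leaf w ⊆ F.leaf v := by
  intro n
  induction n using Nat.strong_induction_on with
  | _ n ih =>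
    intro v w hn hp
    rcases eq_or_ne (e v) (e w) with heq | hne
    · rw [eq_of_apply_eq e heq]
    · have hlt : (e v).length < (e w).length :=
        lt_of_le_of_ne hp.length_le fun h => hne (hp.eq_of_length h)
      have hwne : e w ≠ [] := by
        intro h; rw [h] at hlt; simp at hlt
      set t : F.Node := e.symm ((e w).dropLast) with ht
      have het : e t = (e w).dropLast := e.apply_symm_apply _
      have hson : w ∈ F.Sons t := by
        rw [sons_iff e]
        exact ⟨(e w).getLast hwne, by rw [het, dropLast_append_getLast hwne]⟩
      have hlen : (e t).length = n - 1 := by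
        rw [het, length_dropLast, hn]
      have hsub1 : F.leaf w ⊆ F.leaf t := leaf_son_subset e hLS hson
      have hvt : e v <+: e t := by
        refine prefix_of_prefix_length_le hp ?_ ?_
        · rw [het]; exact (dropLast_prefix _)
        · rw [hlen]; omega
      have hsub2 : F.leaf t ⊆ F.leaf v := ih (n - 1) (by omega) v t hlen hvt
      exact hsub1.trans hsub2

lemma leaf_mono (hLS : F.LocallyStrict) {v w : F.Node} (h : e v <+: e w) :
    F.leaf w ⊆ F.leaf v := leaf_mono_aux e hLS (e w).length v w rfl h

end PiAux

namespace PiAux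

open List FoliageTree

variable {X : Type u} {F : FoliageTree X} (e : F.lt ≃r seqLT)

lemma rise_mono {p : X} {U V : Set X} (hUV : U ⊆ V) (hU : U.Nonempty) :
    F.rise p U ⊆ F.rise p V := by
  rintro n ⟨v, hv, href, hh⟩
  refine ⟨v, hv, ?_, hh⟩
  intro D hD hDne
  obtain ⟨G, hG1, hG2, hG3⟩ := href U rfl hU
  rw [Set.mem_singleton_iff] at hD
  exact ⟨G, hG1, hG2, hD ▸ hG3.trans hUV⟩

include e

lemma scope_comparable (hLS : F.LocallyStrict) {p : X} {v w : F.Node}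
    (hv : p ∈ F.leaf v) (hw : p ∈ F.leaf w) : e v <+: e w ∨ e w <+: e v := by
  by_contra hcon
  push_neg at hcon
  obtain ⟨h1, h2⟩ := hcon
  have hQ : ∃ k, (e v).take k ≠ (e w).take k := by
    rcases le_total (e v).length (e w).length with hle | hle
    · refine ⟨(e v).length, ?_⟩
      rw [take_of_length_le le_rfl]
      intro h; exact h1 (prefix_iff_eq_take.2 h)
    · refine ⟨(e w).length, ?_⟩
      rw [take_of_length_le le_rfl]
      intro h; exact h2 (prefix_iff_eq_take.2 h.symm)
  classical
  have hknz : Nat.find hQ ≠ 0 := by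
    intro h
    have := Nat.find_spec hQ
    rw [h] at this
    simp at this
  obtain ⟨j, hj⟩ : ∃ j, Nat.find hQ = j + 1 := ⟨Nat.find hQ - 1, by omega⟩
  have hQj : (e v).take j = (e w).take j := by
    by_contra h
    exact Nat.find_min hQ (by omega) h
  have hQk : (e v).take (j + 1) ≠ (e w).take (j + 1) := by
    have := Nat.find_spec hQ
    rwa [hj] at this
  have hjv : j < (e v).length := by
    by_contra h
    push_neg at h
    apply h1
    have hev : e v = (e w).take j := by rw [← hQj, take_of_length_le h]
    rw [hev]; exact take_prefix _ _
  have hjw : j < (e w).length := by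
    by_contra h
    push_neg at h
    apply h2
    have hew : e w = (e v).take j := by rw [hQj, take_of_length_le h]
    rw [hew]; exact take_prefix _ _
  have hv1 : (e v).take (j + 1) = (e v).take j ++ [(e v)[j]] := by
    rw [take_succ, getElem?_eq_getElem hjv]; rfl
  have hw1 : (e w).take (j + 1) = (e v).take j ++ [(e w)[j]] := by
    rw [take_succ, getElem?_eq_getElem hjw, hQj]; rfl
  set c : F.Node := e.symm ((e v).take j) with hc
  have hx : e.symm ((e v).take (j + 1)) ∈ F.Sons c := by
    rw [sons_iff e]
    exact ⟨(e v)[j], by rw [e.apply_symm_apply, e.apply_symm_apply, hv1]⟩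
  have hy : e.symm ((e w).take (j + 1)) ∈ F.Sons c := by
    rw [sons_iff e]
    exact ⟨(e w)[j], by rw [e.apply_symm_apply, e.apply_symm_apply, hw1]⟩
  have hne : e.symm ((e v).take (j + 1)) ≠ e.symm ((e w).take (j + 1)) := by
    intro h
    exact hQk (by simpa using congrArg e h)
  have hpx : p ∈ F.leaf (e.symm ((e v).take (j + 1))) := by
    refine leaf_mono e hLS ?_ hv
    rw [e.apply_symm_apply]; exact take_prefix _ _
  have hpy : p ∈ F.leaf (e.symm ((e w).take (j + 1))) := by
    refine leaf_mono e hLS ?_ hw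
    rw [e.apply_symm_apply]; exact take_prefix _ _
  have hdisj := (hLS c (not_isMax e c)).2 _ hx _ hy hne
  exact Set.disjoint_left.1 hdisj hpx hpy

lemma height_eq (v : F.Node) : F.height v = ((e v).length : Ordinal) := by
  haveI : IsWellOrder {b : F.Node // F.lt b v} fun x y => F.lt x.1 y.1 := F.wellOrdered v
  have hlen : ∀ b : {b : F.Node // F.lt b v}, (e b.1).length < (e v).length := fun b =>
    (seqLT_iff.1 ((lt_iff' e).1 b.2)).2
  have hpre : ∀ b : {b : F.Node // F.lt b v}, e b.1 <+: e v := fun b =>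
    (seqLT_iff.1 ((lt_iff' e).1 b.2)).1
  have key : Nonempty ((fun (x y : {b : F.Node // F.lt b v}) => F.lt x.1 y.1) ≃r
      ((· < ·) : Fin (e v).length → Fin (e v).length → Prop)) := by
    refine ⟨⟨⟨fun b => ⟨(e b.1).length, hlen b⟩,
      fun i => ⟨e.symm ((e v).take i.1), ?_⟩, ?_, ?_⟩, ?_⟩⟩
    · rw [lt_iff' e, e.apply_symm_apply]
      refine seqLT_of_proper (take_prefix _ _) ?_
      have := i.2
      rw [length_take]; omega
    · intro b
      apply Subtype.ext
      show e.symm ((e v).take (e b.1).length) = b.1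
      have h1 : (e v).take (e b.1).length = e b.1 := (prefix_iff_eq_take.1 (hpre b)).symm
      rw [h1, e.symm_apply_apply]
    · intro i
      apply Fin.ext
      show (e (e.symm ((e v).take i.1))).length = i.1
      have := i.2
      rw [e.apply_symm_apply, length_take]; omega
    · intro a b
      show (e a.1).length < (e b.1).length ↔ F.lt a.1 b.1
      constructor
      · intro h
        refine (lt_iff' e).2 (seqLT_of_proper ?_ h)
        exact prefix_of_prefix_length_le (hpre a) (hpre b) h.le
      · intro h
        exact (seqLT_iff.1 ((lt_iff' e).1 h)).2
  calc F.height v = Ordinal.type ((· < ·) : Fin (e v).length → Fin (e v).length → Prop) :=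
        Ordinal.type_eq.2 key
    _ = ((e v).length : Ordinal) := Ordinal.type_fin _

lemma leaf_nonempty (hSB : F.StrictBranches) (v : F.Node) : (F.leaf v).Nonempty := by
  set B : Set F.Node := {w | e w <+: e v ∨ ∃ k, e w = e v ++ replicate k 0} with hB
  have hcomp : ∀ x ∈ B, ∀ y ∈ B, e x <+: e y ∨ e y <+: e x := by
    rintro x (hx | ⟨k, hk⟩) y (hy | ⟨k', hk'⟩)
    · exact prefix_or_prefix_of_prefix hx hy
    · left; exact hx.trans (by rw [hk']; exact prefix_append _ _)
    · right; exact hy.trans (by rw [hk]; exact prefix_append _ _)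
    · rcases le_total k k' with h | h
      · left
        rw [hk, hk']
        exact ⟨replicate (k' - k) 0, by rw [append_assoc, ← replicate_add]; congr 2; omega⟩
      · right
        rw [hk, hk']
        exact ⟨replicate (k - k') 0, by rw [append_assoc, ← replicate_add]; congr 2; omega⟩
  have hchain : F.IsChainN B := by
    intro x hx y hy
    rcases hcomp x hx y hy with h | h
    · rcases eq_or_ne (e x) (e y) with he | he
      · exact Or.inr (Or.inl (e.injective he))
      · exact Or.inl ((lt_iff' e).2 ⟨h, he⟩)
    · rcases eq_or_ne (e y) (e x) with he | he
      · exact Or.inr (Or.inl (e.injective he).symm)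
      · exact Or.inr (Or.inr ((lt_iff' e).2 ⟨h, he⟩))
  have hbranch : F.IsBranch B := by
    refine ⟨hchain, fun C hC hBC => ?_⟩
    refine Set.Subset.antisymm hBC fun c hc => ?_
    set k := (e c).length + 1 with hk
    have hzB : e.symm (e v ++ replicate k 0) ∈ B :=
      Or.inr ⟨k, by rw [e.apply_symm_apply]⟩
    have hzC := hBC hzB
    have hlenz : (e (e.symm (e v ++ replicate k 0))).length = (e v).length + k := by
      rw [e.apply_symm_apply]; simp
    rcases hC c hc _ hzC with hlt | heq | hgt
    · have hp : e c <+: e v ++ replicate k 0 := by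
        have h := (lt_iff' e).1 hlt
        rw [e.apply_symm_apply] at h
        exact h.1
      rcases le_total (e c).length (e v).length with hle | hle
      · exact Or.inl (prefix_of_prefix_length_le hp (prefix_append _ _) hle)
      · obtain ⟨m, hm⟩ : ∃ m, (e c).length = (e v).length + m :=
          ⟨(e c).length - (e v).length, by omega⟩
        refine Or.inr ⟨m, ?_⟩
        have h1 : e c = (e v ++ replicate k 0).take (e c).length := prefix_iff_eq_take.1 hp
        rw [hm] at h1
        rw [h1, take_length_add_append, take_replicate, min_eq_left (show m ≤ k by omega)]
    · rw [heq]; exact hzB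
    · have h := (seqLT_iff.1 ((lt_iff' e).1 hgt)).2
      rw [hlenz] at h; omega
  obtain ⟨q, hq⟩ := hSB.2 B hbranch
  have hvB : v ∈ B := Or.inl (prefix_rfl)
  refine ⟨q, ?_⟩
  have hqmem : q ∈ ⋂ x ∈ B, F.leaf x := by rw [hq]; exact Set.mem_singleton q
  exact Set.biInter_subset_of_mem hvB hqmem

lemma exists_scope_at (hLS : F.LocallyStrict) {r : F.Node} (hr : F.IsRoot r)
    (hrl : F.leaf r = Set.univ) (p : X) (n : ℕ) :
    ∃ v : F.Node, p ∈ F.leaf v ∧ (e v).length = n := by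
  have hr0 : e r = [] := by
    rcases hr (e.symm []) with h | h
    · rw [h, e.apply_symm_apply]
    · have h2 := (lt_iff' e).1 h
      rw [e.apply_symm_apply] at h2
      exact absurd (prefix_nil.1 h2.1) h2.2
  induction n with
  | zero => exact ⟨r, by rw [hrl]; trivial, by rw [hr0]; rfl⟩
  | succ n ih =>
    obtain ⟨v, hpv, hlen⟩ := ih
    have hiu := (hLS v (not_isMax e v)).1
    rw [hiu] at hpv
    obtain ⟨s, hs, hps⟩ := Set.mem_iUnion₂.1 hpv
    obtain ⟨i, hi⟩ := (sons_iff e).1 hs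
    exact ⟨s, hps, by rw [hi]; simp [hlen]⟩

lemma shoot_not_subset_son (hLS : F.LocallyStrict) (hSB : F.StrictBranches)
    {v s₀ : F.Node} (hs₀ : s₀ ∈ F.Sons v) {G : Set X} (hG : G ∈ F.shoot v)
    (hsub : G ⊆ F.leaf s₀) : False := by
  obtain ⟨C, hCsub, hCcof, rfl⟩ := hG
  have hSonsInf : (F.Sons v).Infinite := by
    apply Set.infinite_of_injective_forall_mem (f := fun i : ℕ => e.symm (e v ++ [i]))
    · intro i j hij
      have h := congrArg e hij
      rw [e.apply_symm_apply, e.apply_symm_apply] at h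
      simpa using h
    · intro i
      rw [sons_iff e]
      exact ⟨i, e.apply_symm_apply _⟩
  have hCinf : C.Infinite := by
    have h2 := hSonsInf.diff hCcof
    refine h2.mono fun x hx => ?_
    obtain ⟨hx1, hx2⟩ := hx
    by_contra h
    exact hx2 ⟨hx1, h⟩
  obtain ⟨t, htC, hts⟩ := (hCinf.diff (Set.finite_singleton s₀)).nonempty
  obtain ⟨q, hq⟩ := leaf_nonempty e hSB t
  have hq1 : q ∈ F.leaf s₀ := hsub (Set.mem_biUnion htC hq)
  have hdisj := (hLS v (not_isMax e v)).2 t (hCsub htC) s₀ hs₀ (by simpa using hts)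
  exact Set.disjoint_left.1 hdisj hq hq1

end PiAux

/-- Lemma `rem.rise.vs.grow.into` (b) of the paper. -/
theorem rise_FIP_empty_intersection_infinite
    {X : Type u} [TopologicalSpace X] (F : FoliageTree X) (hF : F.IsPiTree) (p : X) :
    HasFIP {R | ∃ U ∈ nhds p, R = F.rise p U} ∧
      (⋂ U ∈ nhds p, F.rise p U) = ∅ ∧
      ∀ U ∈ nhds p, (F.rise p U).Infinite := by
  classical
  obtain ⟨⟨hOpen, hLS, hOO, hSB, r, hroot, hrleaf⟩, hGrow⟩ := hF
  obtain ⟨e⟩ := hOO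
  have key : ∀ U ∈ nhds p, ∀ N : ℕ, ∃ n ∈ F.rise p U, N ≤ n := by
    intro U hU N
    obtain ⟨vN, hpvN, hlenN⟩ := PiAux.exists_scope_at e hLS hroot hrleaf p N
    have hW : U ∩ F.leaf vN ∈ nhds p :=
      Filter.inter_mem hU ((hOpen vN).mem_nhds hpvN)
    obtain ⟨z, hz, href⟩ := hGrow p _ hW
    obtain ⟨G, hG1, hG2, hG3⟩ := href _ rfl ⟨p, mem_of_mem_nhds hU, hpvN⟩
    have hNz : N ≤ (e z).length := by
      by_contra hcon
      push_neg at hcon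
      have hpref : e z <+: e vN := by
        rcases PiAux.scope_comparable e hLS hz hpvN with h | h
        · exact h
        · exact absurd h.length_le (by omega)
      have hs₀Sons : e.symm ((e vN).take ((e z).length + 1)) ∈ F.Sons z := by
        rw [PiAux.sons_iff e, e.apply_symm_apply]
        refine ⟨(e vN)[(e z).length], ?_⟩
        rw [List.take_succ, List.getElem?_eq_getElem (by omega),
          ← List.prefix_iff_eq_take.1 hpref]
        rfl
      have hleafsub : F.leaf vN ⊆ F.leaf (e.symm ((e vN).take ((e z).length + 1))) := by
        refine PiAux.leaf_mono e hLS ?_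
        rw [e.apply_symm_apply]; exact List.take_prefix _ _
      exact PiAux.shoot_not_subset_son e hLS hSB hs₀Sons hG1
        (hG3.trans (Set.inter_subset_right.trans hleafsub))
    refine ⟨(e z).length, ⟨z, hz, ?_, PiAux.height_eq e z⟩, hNz⟩
    intro D hD hDne
    rw [Set.mem_singleton_iff] at hD
    subst hD
    exact ⟨G, hG1, hG2, hG3.trans Set.inter_subset_left⟩
  have hb3 : ∀ U ∈ nhds p, (F.rise p U).Infinite := by
    intro U hU
    by_contra hfin
    rw [Set.not_infinite] at hfin
    obtain ⟨N, hN⟩ := hfin.bddAbove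
    obtain ⟨n, hn, hNn⟩ := key U hU (N + 1)
    exact absurd (hN hn) (by omega)
  refine ⟨?_, ?_, hb3⟩
  · intro δ hsub hfin hne
    have hsub' : ∀ R, R ∈ δ → ∃ U, U ∈ nhds p ∧ R = F.rise p U := fun R hR => hsub hR
    choose! f hf1 hf2 using hsub'
    have hU : (⋂ R ∈ δ, f R) ∈ nhds p := (Filter.biInter_mem hfin).2 hf1
    obtain ⟨n, hn⟩ := (hb3 _ hU).nonempty
    refine ⟨n, ?_⟩
    rw [Set.mem_sInter]
    intro R hR
    rw [hf2 R hR]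
    exact PiAux.rise_mono (Set.biInter_subset_of_mem hR) ⟨p, mem_of_mem_nhds hU⟩ hn
  · rw [Set.eq_empty_iff_forall_notMem]
    intro n hn
    rw [Set.mem_iInter₂] at hn
    obtain ⟨v, hpv, hlen⟩ := PiAux.exists_scope_at e hLS hroot hrleaf p n
    have hpv' := hpv
    rw [(hLS v (PiAux.not_isMax e v)).1] at hpv'
    obtain ⟨s₀, hs₀, hps₀⟩ := Set.mem_iUnion₂.1 hpv'
    have hU : F.leaf s₀ ∈ nhds p := (hOpen s₀).mem_nhds hps₀
    obtain ⟨w, hw, href, hh⟩ := hn _ hU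
    have hlenw : (e w).length = n := by
      have h := PiAux.height_eq e w
      rw [h] at hh
      exact_mod_cast hh
    have hwv : w = v := by
      rcases PiAux.scope_comparable e hLS hw hpv with h | h
      · exact e.injective (h.eq_of_length (by omega))
      · exact (e.injective (h.eq_of_length (by omega))).symm
    subst hwv
    obtain ⟨G, hG1, hG2, hG3⟩ := href _ rfl ⟨p, hps₀⟩
    exact PiAux.shoot_not_subset_son e hLS hSB hs₀ hG1 hG3
end

section
/- If F is a π-tree on a topological space X, then: the family of leaves {F_v : v a node of F} is a countable π-base for X; each leaf F_v is closed-and-open in X; and for every p ∈ X, the intersection of all leaves containing p equals {p}. -/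
open Set

universe u v

namespace PiTreeAux
set_option linter.unusedSectionVars false
open FoliageTree List Set

variable {X : Type u} [TopologicalSpace X] {F : FoliageTree X} (e : F.lt ≃r seqLT)

lemma seqLT_length {a b : List ℕ} (h : seqLT a b) : a.length < b.length :=
  lt_of_le_of_ne h.1.length_le fun hl => h.2 (h.1.eq_of_length hl)

lemma seqLT_append (l : List ℕ) (n : ℕ) : seqLT l (l ++ [n]) :=
  ⟨List.prefix_append _ _, by simp⟩

lemma mem_sons_iff (x s : F.Node) : s ∈ F.Sons x ↔ ∃ n, e s = e x ++ [n] := by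
  constructor
  · rintro ⟨h1, h2⟩
    rw [← e.map_rel_iff] at h1
    have hlt := seqLT_length h1
    have hle : (e x).length + 1 = (e s).length := by
      by_contra hne
      have h2' : (e x).length + 1 < (e s).length := by omega
      apply h2
      refine ⟨e.symm ((e s).take ((e x).length + 1)), ?_, ?_⟩
      · rw [← e.map_rel_iff]; simp only [RelIso.apply_symm_apply]
        refine ⟨List.prefix_take_iff.mpr ⟨h1.1, by omega⟩, fun hEq => ?_⟩
        have := congrArg List.length hEq
        simp [List.length_take] at this; omega
      · rw [← e.map_rel_iff]; simp only [RelIso.apply_symm_apply]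
        refine ⟨List.take_prefix _ _, fun hEq => ?_⟩
        have := congrArg List.length hEq
        simp [List.length_take] at this; omega
    have hpre : e x = (e s).take (e x).length := List.prefix_iff_eq_take.mp h1.1
    have hdrop : ((e s).drop (e x).length).length = 1 := by
      simp [List.length_drop]; omega
    obtain ⟨n, hn⟩ := List.length_eq_one_iff.mp hdrop
    refine ⟨n, ?_⟩
    conv_lhs => rw [← List.take_append_drop (e x).length (e s)]
    rw [← hpre, hn]
  · rintro ⟨n, hn⟩
    refine ⟨by rw [← e.map_rel_iff, hn]; exact seqLT_append _ _, ?_⟩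
    rintro ⟨t, ht1, ht2⟩
    rw [← e.map_rel_iff] at ht1 ht2
    have h3 := seqLT_length ht1
    have h4 := seqLT_length ht2
    rw [hn] at h4
    simp at h4; omega

lemma not_isMaxNode (e : F.lt ≃r seqLT) (x : F.Node) : ¬ F.IsMaxNode x := fun h =>
  h ⟨e.symm (e x ++ [0]), by rw [← e.map_rel_iff]; simpa using seqLT_append (e x) 0⟩

lemma leaf_split (hls : F.LocallyStrict) (l : List ℕ) :
    F.leaf (e.symm l) = ⋃ n : ℕ, F.leaf (e.symm (l ++ [n])) := by
  rw [(hls _ (not_isMaxNode e (e.symm l))).1]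
  ext p
  simp only [Set.mem_iUnion]
  constructor
  · rintro ⟨s, hs, hp⟩
    obtain ⟨n, hn⟩ := (mem_sons_iff e _ s).1 hs
    simp only [RelIso.apply_symm_apply] at hn
    exact ⟨n, by rw [← hn, RelIso.symm_apply_apply]; exact hp⟩
  · rintro ⟨n, hp⟩
    exact ⟨e.symm (l ++ [n]), (mem_sons_iff e _ _).2 ⟨n, by simp⟩, hp⟩

lemma sons_disjoint (hls : F.LocallyStrict) (l : List ℕ) {m n : ℕ} (h : m ≠ n) :
    Disjoint (F.leaf (e.symm (l ++ [m]))) (F.leaf (e.symm (l ++ [n]))) := by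
  refine (hls (e.symm l) (not_isMaxNode e _)).2 _
    ((mem_sons_iff e _ _).2 ⟨m, by simp⟩) _ ((mem_sons_iff e _ _).2 ⟨n, by simp⟩) ?_
  intro hEq
  apply h
  have := congrArg e hEq
  simp only [RelIso.apply_symm_apply, List.append_cancel_left_eq, List.cons.injEq] at this
  exact this.1

lemma leaf_append_subset (hls : F.LocallyStrict) (l : List ℕ) (n : ℕ) :
    F.leaf (e.symm (l ++ [n])) ⊆ F.leaf (e.symm l) := by
  rw [leaf_split e hls l]
  exact Set.subset_iUnion (fun n => F.leaf (e.symm (l ++ [n]))) n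

lemma leaf_prefix_mono (hls : F.LocallyStrict) :
    ∀ {m l : List ℕ}, l <+: m → F.leaf (e.symm m) ⊆ F.leaf (e.symm l) := by
  intro m
  induction m using List.reverseRecOn with
  | nil => intro l hl; rw [List.prefix_nil.mp hl]
  | append_singleton m a ih =>
    intro l hl
    rcases List.prefix_concat_iff.mp hl with h | h
    · rw [h]
    · exact (leaf_append_subset e hls m a).trans (ih h)

lemma leaf_nil_eq_univ (r : F.Node) (hr : F.IsRoot r) (hru : F.leaf r = Set.univ) :
    F.leaf (e.symm []) = Set.univ := by
  have hre : r = e.symm [] := by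
    rcases hr (e.symm []) with h | h
    · exact h
    · exfalso
      have h' := e.map_rel_iff.mpr h
      simp only [RelIso.apply_symm_apply] at h'
      have := seqLT_length h'
      simp at this
  rw [← hre, hru]

lemma leaf_closed (ho : F.OpenIn) (hls : F.LocallyStrict)
    (hnil : F.leaf (e.symm []) = Set.univ) :
    ∀ l : List ℕ, IsClosed (F.leaf (e.symm l)) := by
  intro l
  induction l using List.reverseRecOn with
  | nil => rw [hnil]; exact isClosed_univ
  | append_singleton l a ih =>
    rw [← isOpen_compl_iff]
    have hcompl : (F.leaf (e.symm (l ++ [a])))ᶜ =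
        (F.leaf (e.symm l))ᶜ ∪ ⋃ m : ℕ, ⋃ _ : m ≠ a, F.leaf (e.symm (l ++ [m])) := by
      ext p
      simp only [Set.mem_compl_iff, Set.mem_union, Set.mem_iUnion]
      constructor
      · intro hp
        by_cases hpl : p ∈ F.leaf (e.symm l)
        · right
          rw [leaf_split e hls l] at hpl
          obtain ⟨m, hm⟩ := Set.mem_iUnion.mp hpl
          exact ⟨m, fun hma => hp (hma ▸ hm), hm⟩
        · left; exact hpl
      · rintro (hp | ⟨m, hma, hpm⟩)
        · exact fun hc => hp (leaf_append_subset e hls l a hc)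
        · exact fun hc => Set.disjoint_left.mp (sons_disjoint e hls l hma) hpm hc
    rw [hcompl]
    exact ih.isOpen_compl.union (isOpen_iUnion fun m => isOpen_iUnion fun _ => ho _)

lemma isBranch_of_seq (g : ℕ → List ℕ) (hlen : ∀ n, (g n).length = n)
    (hpref : ∀ n, g n <+: g (n + 1)) :
    F.IsBranch (Set.range fun n => e.symm (g n)) := by
  have hmono : ∀ {n m : ℕ}, n ≤ m → g n <+: g m := by
    intro n m h
    induction h with
    | refl => exact List.prefix_refl _
    | step _ ih => exact ih.trans (hpref _)
  have hstrict : ∀ {n m : ℕ}, n < m → seqLT (g n) (g m) := by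
    intro n m h
    refine ⟨hmono h.le, fun hEq => ?_⟩
    have := congrArg List.length hEq
    rw [hlen, hlen] at this; omega
  have hlt : ∀ a b : List ℕ, seqLT a b → F.lt (e.symm a) (e.symm b) := fun a b h =>
    e.map_rel_iff.mp (by simpa using h)
  constructor
  · rintro x ⟨n, rfl⟩ y ⟨m, rfl⟩
    rcases lt_trichotomy n m with h | h | h
    · exact Or.inl (hlt _ _ (hstrict h))
    · exact Or.inr (Or.inl (by rw [h]))
    · exact Or.inr (Or.inr (hlt _ _ (hstrict h)))
  · intro C hC hsub
    refine Set.Subset.antisymm hsub fun c hc => ?_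
    rcases hC c hc (e.symm (g (e c).length)) (hsub ⟨_, rfl⟩) with h | h | h
    · exfalso
      have h' := e.map_rel_iff.mpr h
      simp only [RelIso.apply_symm_apply] at h'
      have := seqLT_length h'
      rw [hlen] at this; omega
    · exact ⟨_, h.symm⟩
    · exfalso
      have h' := e.map_rel_iff.mpr h
      simp only [RelIso.apply_symm_apply] at h'
      have := seqLT_length h'
      rw [hlen] at this; omega

lemma leaf_nonempty (e : F.lt ≃r seqLT) (hls : F.LocallyStrict) (hsb : F.StrictBranches) (v : F.Node) :
    (F.leaf v).Nonempty := by
  classical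
  set L := (e v).length with hL
  have hlen : ∀ n, ((e v).take n ++ List.replicate (n - L) 0).length = n := by
    intro n
    simp only [List.length_append, List.length_take, List.length_replicate, ← hL]
    omega
  have hpref : ∀ n, ((e v).take n ++ List.replicate (n - L) 0) <+:
      ((e v).take (n + 1) ++ List.replicate (n + 1 - L) 0) := by
    intro n
    by_cases h : n < L
    · have h1 : n - L = 0 := by omega
      have h2 : n + 1 - L = 0 := by omega
      simp only [h1, h2, List.replicate_zero, List.append_nil]
      exact List.prefix_take_iff.mpr ⟨List.take_prefix _ _, by
        simp only [List.length_take, ← hL]; omega⟩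
    · have h1 : (e v).take n = e v := List.take_of_length_le (by omega)
      have h2 : (e v).take (n + 1) = e v := List.take_of_length_le (by omega)
      have h3 : n + 1 - L = (n - L) + 1 := by omega
      rw [h1, h2, h3, List.replicate_succ', ← List.append_assoc]
      exact List.prefix_append _ _
  obtain ⟨p, hp⟩ := hsb.2 _ (isBranch_of_seq e _ hlen hpref)
  have hv : v ∈ Set.range fun n => e.symm ((e v).take n ++ List.replicate (n - L) 0) := by
    refine ⟨L, ?_⟩
    simp only [Nat.sub_self, List.replicate_zero, List.append_nil]
    rw [hL, List.take_length, RelIso.symm_apply_apply]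
  refine ⟨p, ?_⟩
  have hpmem : p ∈ ⋂ x ∈ (Set.range fun n =>
      e.symm ((e v).take n ++ List.replicate (n - L) 0)), F.leaf x := by
    rw [hp]; exact rfl
  exact Set.mem_iInter₂.mp hpmem v hv

lemma scope_iInter (hls : F.LocallyStrict) (hsb : F.StrictBranches)
    (hnil : F.leaf (e.symm []) = Set.univ) (p : X) :
    (⋂ v ∈ F.scope p, F.leaf v) = {p} := by
  classical
  have step : ∀ l : List ℕ, p ∈ F.leaf (e.symm l) → ∃ n, p ∈ F.leaf (e.symm (l ++ [n])) := by
    intro l hl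
    rw [leaf_split e hls l] at hl
    exact Set.mem_iUnion.mp hl
  let g : ℕ → {l : List ℕ // p ∈ F.leaf (e.symm l)} := fun n =>
    Nat.rec ⟨[], by rw [hnil]; trivial⟩
      (fun _ ih => ⟨ih.1 ++ [Classical.choose (step ih.1 ih.2)],
        Classical.choose_spec (step ih.1 ih.2)⟩) n
  have hsucc : ∀ n, (g (n + 1)).1
      = (g n).1 ++ [Classical.choose (step (g n).1 (g n).2)] := fun n => rfl
  have hlen : ∀ n, (g n).1.length = n := by
    intro n
    induction n with
    | zero => rfl
    | succ n ih => rw [hsucc]; simp [ih]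
  have hpref : ∀ n, (g n).1 <+: (g (n + 1)).1 := fun n => by
    rw [hsucc]; exact List.prefix_append _ _
  obtain ⟨q, hq⟩ := hsb.2 _ (isBranch_of_seq e (fun n => (g n).1) hlen hpref)
  have hpB : p ∈ ⋂ x ∈ (Set.range fun n => e.symm (g n).1), F.leaf x :=
    Set.mem_iInter₂.mpr (by rintro x ⟨n, rfl⟩; exact (g n).2)
  have hpq : p = q := by rw [hq] at hpB; exact hpB
  apply Set.Subset.antisymm
  · intro y hy
    have hyB : y ∈ ⋂ x ∈ (Set.range fun n => e.symm (g n).1), F.leaf x := by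
      refine Set.mem_iInter₂.mpr ?_
      rintro x ⟨n, rfl⟩
      exact Set.mem_iInter₂.mp hy _ ((g n).2)
    rw [hq] at hyB
    rw [hpq]
    exact hyB
  · intro y hy
    rw [Set.mem_singleton_iff.mp hy]
    exact Set.mem_iInter₂.mpr fun v hv => hv

end PiTreeAux

/-- Lemma `lem.pi.base.pseudo.base` of the paper: the leaves of a π-tree form
a countable π-base of clopen sets, and the leaves containing a point
intersect exactly in that point. -/
theorem piTree_leaves_countable_piBase_clopen
    {X : Type u} [TopologicalSpace X] (F : FoliageTree X) (hF : F.IsPiTree) :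
    Set.Countable {S : Set X | ∃ v, S = F.leaf v} ∧
      (∀ v, (F.leaf v).Nonempty ∧ IsOpen (F.leaf v)) ∧
      (∀ U : Set X, IsOpen U → U.Nonempty → ∃ v, F.leaf v ⊆ U) ∧
      (∀ v, IsClosed (F.leaf v) ∧ IsOpen (F.leaf v)) ∧
      ∀ p : X, (⋂ v ∈ F.scope p, F.leaf v) = {p} := by
  obtain ⟨⟨ho, hls, ⟨e⟩, hsb, r, hr, hru⟩, hgrow⟩ := hF
  have hnil : F.leaf (e.symm []) = Set.univ := PiTreeAux.leaf_nil_eq_univ e r hr hru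
  have hcount : Countable F.Node := Countable.of_equiv (List ℕ) e.toEquiv.symm
  refine ⟨?_, ?_, ?_, ?_, ?_⟩
  · have hset : {S : Set X | ∃ v, S = F.leaf v} = Set.range F.leaf := by
      ext S; simp [Set.mem_range, eq_comm]
    rw [hset]; exact Set.countable_range _
  · exact fun v => ⟨PiTreeAux.leaf_nonempty e hls hsb v, ho v⟩
  · intro U hU hUne
    obtain ⟨p, hp⟩ := hUne
    obtain ⟨z, _, href⟩ := hgrow p U (hU.mem_nhds hp)
    obtain ⟨G, hG, hGne, hGU⟩ := href U rfl ⟨p, hp⟩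
    obtain ⟨C, _, _, rfl⟩ := hG
    obtain ⟨x, hx⟩ := hGne
    simp only [Set.mem_iUnion] at hx
    obtain ⟨s, hs, _⟩ := hx
    exact ⟨s, (Set.subset_iUnion₂ s hs).trans hGU⟩
  · intro v
    have hcl := PiTreeAux.leaf_closed e ho hls hnil (e v)
    rw [RelIso.symm_apply_apply] at hcl
    exact ⟨hcl, ho v⟩
  · exact PiTreeAux.scope_iInter e hls hsb hnil
end
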